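/- arXiv:2307.09214 — 7 statements merged into one kernel-verified Lean document; each statement's English description precedes it below -/
import Mathlib

section
/- Suppose an agent algorithm ALG with 0 bits of memory and sensing range V patrols the d-dimensional grid graph 𝒟 = [n_1] × … × [n_d]. Fix any v_1 ∈ 𝒟, let v_1, v_2, … be the trajectory of ALG started at v_1, and let T be the least index such that {v_1, …, v_T} = 𝒟. Then T = ∏_{i=1}^{d} n_i, the vertices v_1, …, v_T are pairwise distinct, and the closed walk v_1 v_2 … v_T v_1 is a Hamiltonian cycle of 𝒟 (in particular ALG's step at v_T moves the agent to v_1). -/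
open Finset

/-- Manhattan (ℓ¹) norm of an integer vector. -/
def manhattan {d : ℕ} (p : Fin d → ℤ) : ℤ := ∑ i, |p i|

/-- The grid graph vertex set `[n 0] × ⋯ × [n (d-1)]`. -/
def grid {d : ℕ} (n : Fin d → ℕ) : Set (Fin d → ℤ) :=
  {p | ∀ i, 1 ≤ p i ∧ p i ≤ (n i : ℤ)}

/-- Sensing data `S_V(p)`: relative positions of points of `D` within
Manhattan distance `V` of `p`. -/
def sense {d : ℕ} (D : Set (Fin d → ℤ)) (V : ℕ) (p : Fin d → ℤ) : Set (Fin d → ℤ) :=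
  {q | p + q ∈ D ∧ manhattan q ≤ (V : ℤ)}

/-- A deterministic agent algorithm with `b` bits of memory: maps sensing data and a
memory state to a step and a new memory state. -/
structure Agent (d b : ℕ) where
  act : Set (Fin d → ℤ) → (Fin b → Bool) → (Fin d → ℤ) × (Fin b → Bool)

namespace Agent

/-- Validity: at every vertex of `D`, in every memory state, the chosen step is a
unit step leading to a vertex of `D`. -/
def Valid {d b : ℕ} (A : Agent d b) (D : Set (Fin d → ℤ)) (V : ℕ) : Prop :=
  ∀ p ∈ D, ∀ m, manhattan (A.act (sense D V p) m).1 = 1 ∧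
    (A.act (sense D V p) m).1 ∈ sense D V p

/-- The trajectory (position, memory) of the agent after `t` steps, starting from
position `v` and memory state `m`. -/
def traj {d b : ℕ} (A : Agent d b) (D : Set (Fin d → ℤ)) (V : ℕ)
    (v : Fin d → ℤ) (m : Fin b → Bool) : ℕ → (Fin d → ℤ) × (Fin b → Bool)
  | 0 => (v, m)
  | t + 1 =>
      let s := Agent.traj A D V v m t
      (s.1 + (A.act (sense D V s.1) s.2).1, (A.act (sense D V s.1) s.2).2)

/-- The agent patrols `D`: it is valid, and from any initial position in `D` and any
initial memory state, its trajectory visits every vertex of `D` within finitely many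
steps. -/
def Patrols {d b : ℕ} (A : Agent d b) (D : Set (Fin d → ℤ)) (V : ℕ) : Prop :=
  A.Valid D V ∧ ∀ v₁ ∈ D, ∀ m, ∀ v ∈ D, ∃ t, (A.traj D V v₁ m t).1 = v

end Agent

/-- The graph on a set of integer vectors with edges between points at Manhattan
distance 1. -/
def latticeGraph {d : ℕ} (S : Set (Fin d → ℤ)) : SimpleGraph S where
  Adj p q := manhattan (p.1 - q.1) = 1
  symm := by
    constructor
    intro p q h
    simp only [manhattan, Pi.sub_apply] at h ⊢
    simpa [abs_sub_comm] using h
  loopless := by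
    constructor
    intro p h
    simp [manhattan] at h

/-- The `d`-dimensional grid graph `[n 0] × ⋯ × [n (d-1)]`. -/
def gridGraph {d : ℕ} (n : Fin d → ℕ) : SimpleGraph (grid n) :=
  latticeGraph (grid n)

/-- If `f^[P] x = x`, iterates of `x` reduce mod `P`. -/
lemma iterate_mod_aux {α : Type*} (f : α → α) (x : α) (P : ℕ) (hP : 0 < P)
    (hx : f^[P] x = x) : ∀ t, f^[t] x = f^[t % P] x := by
  intro t
  induction t using Nat.strong_induction_on with
  | _ t ih =>
    by_cases h : t < P
    · rw [Nat.mod_eq_of_lt h]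
    · push_neg at h
      have h1 : t = (t - P) + P := by omega
      have h2 : f^[t] x = f^[t - P] x := by
        conv_lhs => rw [h1]
        rw [Function.iterate_add_apply, hx]
      rw [h2, ih (t - P) (by omega), Nat.mod_eq_sub_mod h]

/-- If from every point the orbit of `f` covers a finite type, then some positive
iterate of `f` is the identity. -/
lemma exists_global_period {α : Type*} [Finite α] (f : α → α)
    (hcov : ∀ w v : α, ∃ t, f^[t] w = v) (x : α) :
    ∃ p, 0 < p ∧ ∀ v, f^[p] v = v := by
  obtain ⟨a, b, hab, heq⟩ := Finite.exists_ne_map_eq_of_infinite (fun t => f^[t] x)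
  wlog hlt : a < b generalizing a b
  · exact this b a hab.symm heq.symm (by omega)
  set p := b - a with hp
  have hppos : 0 < p := by omega
  have hper : ∀ t, a ≤ t → f^[t + p] x = f^[t] x := by
    intro t ht
    have h1 : t + p = (t - a) + b := by omega
    have h2 : t = (t - a) + a := by omega
    rw [h1, Function.iterate_add_apply, ← heq, ← Function.iterate_add_apply, ← h2]
  have hmod : ∀ t, f^[a + t] x = f^[a + t % p] x := by
    intro t
    induction t using Nat.strong_induction_on with
    | _ t ih =>
      by_cases h : t < p
      · rw [Nat.mod_eq_of_lt h]
      · push_neg at h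
        have h1 : a + t = (a + (t - p)) + p := by omega
        have h2 : f^[a + t] x = f^[a + (t - p)] x := by
          conv_lhs => rw [h1]
          exact hper (a + (t - p)) (by omega)
        rw [h2, ih (t - p) (by omega), Nat.mod_eq_sub_mod h]
  set w := f^[a] x with hw
  have hfw : f^[p] w = w := by
    have := hper a le_rfl
    rw [hw, ← Function.iterate_add_apply, Nat.add_comm p a]
    exact this
  have hcovp : ∀ v : α, ∃ r < p, f^[r] w = v := by
    intro v
    obtain ⟨t, ht⟩ := hcov w v
    refine ⟨t % p, Nat.mod_lt _ hppos, ?_⟩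
    have h1 : f^[t] w = f^[a + t] x := by
      rw [hw, ← Function.iterate_add_apply, Nat.add_comm t a]
    have h2 : f^[t % p] w = f^[a + t % p] x := by
      rw [hw, ← Function.iterate_add_apply, Nat.add_comm _ a]
    rw [h2, ← hmod, ← h1, ht]
  refine ⟨p, hppos, fun v => ?_⟩
  obtain ⟨r, _, hr⟩ := hcovp v
  rw [← hr, ← Function.iterate_add_apply, Nat.add_comm p r,
    Function.iterate_add_apply, hfw]


/-- If a `0`-bit agent algorithm with sensing range `V` patrols the
grid `𝒟 = [n 0] × ⋯ × [n (d-1)]`, `v₁ ∈ 𝒟`, and `T` is the least index such that the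
first `T` trajectory points `v₁, …, v_T` (i.e. `traj 0, …, traj (T-1)`) cover `𝒟`,
then `T = ∏ i, n i`, the vertices `v₁, …, v_T` are pairwise distinct, and the walk
closes up into a Hamiltonian cycle: the step at `v_T` moves the agent back to `v₁`. -/

theorem zero_bit_patrol_induces_hamiltonian_cycle {d : ℕ} (hd : 1 ≤ d)
    (n : Fin d → ℕ) (hn : ∀ i, 2 ≤ n i) (V : ℕ) (hV : 1 ≤ V)
    (A : Agent d 0) (hA : A.Patrols (grid n) V)
    (v₁ : Fin d → ℤ) (hv₁ : v₁ ∈ grid n) (m : Fin 0 → Bool) (T : ℕ)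
    (hT : IsLeast {T' : ℕ | ∀ v ∈ grid n, ∃ t < T', (A.traj (grid n) V v₁ m t).1 = v} T) :
    T = ∏ i, n i ∧
    (∀ s t, s < T → t < T →
      (A.traj (grid n) V v₁ m s).1 = (A.traj (grid n) V v₁ m t).1 → s = t) ∧
    (A.traj (grid n) V v₁ m T).1 = v₁ := by
    classical
  obtain ⟨hval, hpat⟩ := hA
  haveI hmem : Subsingleton (Fin 0 → Bool) :=
    ⟨fun a b => funext fun i => i.elim0⟩
  set D := grid n with hDdef
  -- the step function on the grid
  let f : D → D := fun p => ⟨p.1 + (A.act (sense D V p.1) m).1, ((hval p.1 p.2 m).2).1⟩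
  -- the trajectory is iteration of `f`
  have htraj : ∀ (w : D) (t : ℕ), (A.traj D V w.1 m t).1 = (f^[t] w).1 := by
    intro w t
    induction t with
    | zero => rfl
    | succ t ih =>
      have hm : (A.traj D V w.1 m t).2 = m := Subsingleton.elim _ _
      rw [Function.iterate_succ_apply']
      show (A.traj D V w.1 m t).1 +
        (A.act (sense D V (A.traj D V w.1 m t).1) (A.traj D V w.1 m t).2).1
          = (f (f^[t] w)).1
      rw [hm, ih]
  -- finiteness and cardinality of the grid
  have hDfin : D = ↑(Fintype.piFinset fun i => Finset.Icc (1:ℤ) (n i)) := by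
    ext p
    simp only [hDdef, grid, Set.mem_setOf_eq, Finset.coe_sort_coe, Finset.mem_coe,
      Fintype.mem_piFinset, Finset.mem_Icc]
  haveI : Finite D := by
    rw [hDfin]; exact (Finset.finite_toSet _).to_subtype
  have hcard : Nat.card D = ∏ i, n i := by
    rw [hDfin, Nat.card_coe_set_eq, Set.ncard_coe_finset, Fintype.card_piFinset]
    refine Finset.prod_congr rfl fun i _ => ?_
    rw [Int.card_Icc]
    omega
  -- patrolling in terms of iteration
  have hcov : ∀ w v : D, ∃ t, f^[t] w = v := by
    intro w v
    obtain ⟨t, ht⟩ := hpat w.1 w.2 m v.1 v.2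
    exact ⟨t, Subtype.ext ((htraj w t).symm.trans ht)⟩
  obtain ⟨p, hppos, hfix⟩ := exists_global_period f hcov ⟨v₁, hv₁⟩
  have hinj : Function.Injective f := by
    intro u v huv
    obtain ⟨q, hq⟩ : ∃ q, p = q + 1 := ⟨p - 1, by omega⟩
    have h2 : f^[p] u = f^[p] v := by
      rw [hq, Function.iterate_succ_apply, Function.iterate_succ_apply, huv]
    rwa [hfix, hfix] at h2
  -- minimal period of the start vertex
  have hex : ∃ k, 0 < k ∧ f^[k] (⟨v₁, hv₁⟩ : D) = ⟨v₁, hv₁⟩ := ⟨p, hppos, hfix _⟩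
  set P := Nat.find hex with hPdef
  obtain ⟨hPpos, hPfix⟩ := Nat.find_spec hex
  have hPmin : ∀ k, 0 < k → k < P → f^[k] (⟨v₁, hv₁⟩ : D) ≠ ⟨v₁, hv₁⟩ :=
    fun k hk hkP h => Nat.find_min hex hkP ⟨hk, h⟩
  -- distinctness within one period
  have hinjP : ∀ s t, s < P → t < P → f^[s] (⟨v₁, hv₁⟩ : D) = f^[t] ⟨v₁, hv₁⟩ → s = t := by
    intro s t hs ht h
    wlog hst : s ≤ t generalizing s t
    · exact (this t s ht hs h.symm (by omega)).symm
    have h1 : f^[s] (f^[t - s] (⟨v₁, hv₁⟩ : D)) = f^[s] ⟨v₁, hv₁⟩ := by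
      rw [← Function.iterate_add_apply, Nat.add_sub_cancel' hst]
      exact h.symm
    have h2 : f^[t - s] (⟨v₁, hv₁⟩ : D) = ⟨v₁, hv₁⟩ := hinj.iterate s h1
    rcases Nat.eq_zero_or_pos (t - s) with h3 | h3
    · omega
    · exact absurd h2 (hPmin _ h3 (by omega))
  -- coverage within one period
  have hmod := iterate_mod_aux f (⟨v₁, hv₁⟩ : D) P hPpos hPfix
  have hcovP : ∀ v : D, ∃ r < P, f^[r] (⟨v₁, hv₁⟩ : D) = v := by
    intro v
    obtain ⟨t, ht⟩ := hcov ⟨v₁, hv₁⟩ v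
    exact ⟨t % P, Nat.mod_lt _ hPpos, by rw [← hmod, ht]⟩
  -- the period is the cardinality of the grid
  have hbij : Function.Bijective (fun r : Fin P => f^[r.1] (⟨v₁, hv₁⟩ : D)) := by
    constructor
    · intro r s h
      exact Fin.ext (hinjP r.1 s.1 r.2 s.2 h)
    · intro v
      obtain ⟨r, hr, h⟩ := hcovP v
      exact ⟨⟨r, hr⟩, h⟩
  have hPcard : P = Nat.card D := by
    rw [← Nat.card_eq_of_bijective _ hbij, Nat.card_eq_fintype_card, Fintype.card_fin]
  -- T = P
  have hTle : T ≤ P := by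
    refine hT.2 ?_
    intro v hv
    obtain ⟨r, hr, h⟩ := hcovP ⟨v, hv⟩
    exact ⟨r, hr, (htraj ⟨v₁, hv₁⟩ r).trans (congrArg Subtype.val h)⟩
  have hTge : P ≤ T := by
    have hc := hT.1
    choose t htlt hteq using fun (v : D) => hc v.1 v.2
    have hinjT : Function.Injective (fun v : D => (⟨t v, htlt v⟩ : Fin T)) := by
      intro u v h
      simp only [Fin.mk.injEq] at h
      refine Subtype.ext ((hteq u).symm.trans ?_)
      rw [h]; exact hteq v
    calc P = Nat.card D := hPcard
      _ ≤ Nat.card (Fin T) := Nat.card_le_card_of_injective _ hinjT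
      _ = T := by simp
  have hTP : T = P := le_antisymm hTle hTge
  refine ⟨by rw [hTP, hPcard, hcard], ?_, ?_⟩
  · intro s t hs ht h
    refine hinjP s t (hTP ▸ hs) (hTP ▸ ht) ?_
    exact Subtype.ext (((htraj ⟨v₁, hv₁⟩ s).symm.trans h).trans (htraj ⟨v₁, hv₁⟩ t))
  · refine (htraj ⟨v₁, hv₁⟩ T).trans ?_
    rw [hTP]
    exact congrArg Subtype.val hPfix
end

section
/- Let 𝒟 = [n_1] × … × [n_d] be a d-dimensional grid graph (all n_i ≥ 2). If ∏_{i=1}^{d} n_i is odd, then for every sensing range V ≥ 1 there is no agent algorithm with 0 bits of memory and sensing range V that patrols 𝒟. -/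
open Finset

/-- If `∏ i, n i` is odd then for every sensing range `V ≥ 1` no
agent algorithm with `0` bits of memory patrols the grid `[n 0] × ⋯ × [n (d-1)]`. -/
theorem no_zero_bit_patrol_of_odd_product {d : ℕ} (hd : 1 ≤ d) (n : Fin d → ℕ)
    (hn : ∀ i, 2 ≤ n i) (hodd : Odd (∏ i, n i)) :
    ∀ V : ℕ, 1 ≤ V → ¬ ∃ A : Agent d 0, A.Patrols (grid n) V := by
  rintro V hV ⟨A, hval, hpat⟩
  set D := grid n with hD
  -- D is finite
  have hDpi : D = Set.univ.pi (fun i => Set.Icc (1:ℤ) (n i)) := by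
    ext p
    simp only [hD, grid, Set.mem_setOf_eq, Set.mem_pi, Set.mem_univ, true_implies,
      Set.mem_Icc]
  have hfin : D.Finite := by
    rw [hDpi]; exact Set.Finite.pi (fun i => Set.finite_Icc _ _)
  haveI := hfin.to_subtype
  -- the unique memory state
  set m0 : Fin 0 → Bool := fun i => i.elim0 with hm0
  -- the deterministic step function
  have hstep : ∀ p : D, (p : Fin d → ℤ) + (A.act (sense D V p) m0).1 ∈ D := fun p =>
    ((hval p p.2 m0).2).1
  set g : D → D := fun p => ⟨(p : Fin d → ℤ) + (A.act (sense D V p) m0).1, hstep p⟩ with hg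
  -- trajectory equals iterates of g
  have htraj : ∀ (p : D) (t : ℕ), (A.traj D V p m0 t).1 = ((g^[t] p : D) : Fin d → ℤ) := by
    intro p t
    induction t with
    | zero => simp [Agent.traj]
    | succ t ih =>
      have hmem : (A.traj D V p m0 t).2 = m0 := Subsingleton.elim _ _
      rw [Function.iterate_succ_apply']
      show (A.traj D V p m0 t).1 + (A.act (sense D V (A.traj D V p m0 t).1)
        (A.traj D V p m0 t).2).1 = _
      rw [ih, hmem, hg]
  -- parity function
  set par : D → ZMod 2 := fun p => ∑ i, (((p : Fin d → ℤ) i : ZMod 2)) with hparf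
  have hneg : ∀ x : ZMod 2, -x = x := by decide
  have hpar : ∀ p : D, par (g p) = par p + 1 := by
    intro p
    have h1 : manhattan (A.act (sense D V p) m0).1 = 1 := (hval p p.2 m0).1
    have h2 : (∑ i, (((A.act (sense D V (p : Fin d → ℤ)) m0).1 i : ZMod 2))) = 1 := by
      have hc := congrArg (fun z : ℤ => (z : ZMod 2)) h1
      simp only [manhattan, Int.cast_sum, Int.cast_one] at hc
      rw [← hc]
      refine Finset.sum_congr rfl (fun i _ => ?_)
      rcases abs_choice ((A.act (sense D V (p : Fin d → ℤ)) m0).1 i) with h | h <;>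
        rw [h] <;> push_cast <;> rw [hneg]
    show (∑ i, ((((p : Fin d → ℤ) i + (A.act (sense D V (p : Fin d → ℤ)) m0).1 i) : ℤ) : ZMod 2)) = _
    push_cast
    rw [Finset.sum_add_distrib, h2]
  have hiter : ∀ (p : D) (t : ℕ), par (g^[t] p) = par p + t := by
    intro p t
    induction t with
    | zero => simp
    | succ t ih => rw [Function.iterate_succ_apply', hpar, ih]; push_cast; ring
  -- a starting point
  have hone : (fun _ : Fin d => (1:ℤ)) ∈ D := by
    intro i
    refine ⟨le_refl 1, ?_⟩
    show (1:ℤ) ≤ (n i : ℤ)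
    exact_mod_cast le_trans (by norm_num) (hn i)
  set x : D := ⟨fun _ => 1, hone⟩ with hx
  -- find a periodic point
  obtain ⟨a, b, hab, he⟩ := Finite.exists_ne_map_eq_of_infinite (fun t : ℕ => g^[t] x)
  wlog hlt : a < b generalizing a b
  · exact this b a hab.symm he.symm (lt_of_le_of_ne (le_of_not_gt hlt) hab.symm)
  set y : D := g^[a] x with hy
  have hk : Function.IsPeriodicPt g (b - a) y := by
    show g^[b - a] y = y
    rw [hy, ← Function.iterate_add_apply, Nat.sub_add_cancel hlt.le]
    exact he.symm
  have hyp : y ∈ Function.periodicPts g :=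
    Function.mk_mem_periodicPts (Nat.sub_pos_of_lt hlt) hk
  set L := Function.minimalPeriod g y with hL
  have hLpos : 0 < L := Function.minimalPeriod_pos_of_mem_periodicPts hyp
  -- the orbit map Fin L → D is bijective
  have hsurj : ∀ v : D, ∃ t : ℕ, t < L ∧ g^[t] y = v := by
    intro v
    obtain ⟨t, ht⟩ := hpat y y.2 m0 v v.2
    rw [htraj] at ht
    have hgt : g^[t] y = v := Subtype.ext ht
    exact ⟨t % L, Nat.mod_lt _ hLpos, by rw [Function.iterate_mod_minimalPeriod_eq, hgt]⟩
  have hbij : Function.Bijective (fun t : Fin L => g^[(t : ℕ)] y) := by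
    constructor
    · intro s t hst
      exact Fin.ext (Function.iterate_injOn_Iio_minimalPeriod s.2 t.2 hst)
    · intro v
      obtain ⟨t, htL, ht⟩ := hsurj v
      exact ⟨⟨t, htL⟩, ht⟩
  have hcard : L = Nat.card D := by
    have := Nat.card_eq_of_bijective _ hbij
    simpa using this
  -- card of D
  have hcardD : Nat.card D = ∏ i, n i := by
    rw [hDpi]
    rw [Nat.card_congr (Equiv.Set.univPi (fun i => Set.Icc (1:ℤ) (n i)))]
    rw [Nat.card_pi]
    refine Finset.prod_congr rfl (fun i _ => ?_)
    rw [← Finset.coe_Icc, Nat.card_coe_set_eq, Set.ncard_coe_finset, Int.card_Icc]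
    simp
  -- L is odd
  have hLodd : Odd L := by rw [hcard, hcardD]; exact hodd
  -- but L is even by parity
  have hLy : g^[L] y = y := Function.iterate_minimalPeriod
  have hpL : par y + (L : ZMod 2) = par y := by rw [← hiter, hLy]
  have hL0 : (L : ZMod 2) = 0 := by
    have h' : par y + (L : ZMod 2) = par y + 0 := by rw [add_zero]; exact hpL
    exact add_left_cancel h'
  rw [Nat.odd_iff] at hLodd
  rw [← ZMod.natCast_mod L 2, hLodd] at hL0
  simp at hL0
end

section
/- Let 𝒟 = [n_1] × … × [n_d] be a d-dimensional grid graph (all n_i ≥ 2), let V ≥ 1, and set m_i := min(n_i, 2V + 1). If ∏_{i=1}^{d} m_i is odd, then no agent algorithm with 0 bits of memory and sensing range V patrols 𝒟. -/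
open Finset

section AuxNP

namespace NP

def K (N V : ℕ) : ℤ := max ((N:ℤ) - V) ((V:ℤ)+1)
def rfun (N V : ℕ) (x : ℤ) : ℤ := min (x-1) (V:ℤ) + max (x - K N V) 0
def mI (N V : ℕ) : ℤ := min (N:ℤ) (2*V+1)

lemma rfun_step (N V : ℕ) (x : ℤ) :
    rfun N V (x+1) = rfun N V x ∨ rfun N V (x+1) = rfun N V x + 1 := by
  unfold rfun K; omega

lemma rfun_sub (N V : ℕ) (x : ℤ) :
    rfun N V (x-1) = rfun N V x ∨ rfun N V (x-1) = rfun N V x - 1 := by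
  unfold rfun K; omega

lemma rfun_sense (N V : ℕ) {x y : ℤ} (h : rfun N V x = rfun N V y) :
    min (x-1) (V:ℤ) = min (y-1) (V:ℤ) ∧ min ((N:ℤ) - x) (V:ℤ) = min ((N:ℤ) - y) (V:ℤ) := by
  unfold rfun K at h; omega

lemma rfun_bounds (N V : ℕ) {x : ℤ} (h1 : 1 ≤ x) (h2 : x ≤ N) :
    0 ≤ rfun N V x ∧ rfun N V x ≤ mI N V - 1 := by
  unfold rfun K mI; omega

lemma rfun_surj (N V : ℕ) {c : ℤ} (h0 : 0 ≤ c) (hc : c ≤ mI N V - 1) :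
    ∃ x, 1 ≤ x ∧ x ≤ (N:ℤ) ∧ rfun N V x = c := by
  by_cases h : c ≤ (V:ℤ)
  · exact ⟨c+1, by unfold mI at hc; unfold rfun K; omega⟩
  · exact ⟨c + K N V - V, by unfold mI at hc; unfold rfun K at *; omega⟩

lemma abs_le_manhattan {d : ℕ} (q : Fin d → ℤ) (i : Fin d) : |q i| ≤ manhattan q :=
  Finset.single_le_sum (fun j _ => abs_nonneg (q j)) (Finset.mem_univ i)

lemma unit_step {d : ℕ} {s : Fin d → ℤ} (h : manhattan s = 1) :
    ∃ i, (s i = 1 ∨ s i = -1) ∧ ∀ j, j ≠ i → s j = 0 := by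
  have hex : ∃ i, s i ≠ 0 := by
    by_contra hc
    push_neg at hc
    have h0 : manhattan s = 0 := Finset.sum_eq_zero fun j _ => by rw [hc j, abs_zero]
    omega
  obtain ⟨i, hi⟩ := hex
  have h1 : |s i| ≤ 1 := h ▸ abs_le_manhattan s i
  have h2 : 1 ≤ |s i| := Int.one_le_abs (by omega)
  refine ⟨i, ?_, ?_⟩
  · rcases abs_le.mp h1 with ⟨hl, hr⟩; omega
  · intro j hj
    have hm : (∑ k : Fin d, |s k|) = 1 := h
    have hsum : |s i| + ∑ k ∈ Finset.univ.erase i, |s k| = ∑ k : Fin d, |s k| :=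
      Finset.add_sum_erase _ (fun k => |s k|) (Finset.mem_univ i)
    have hnn : 0 ≤ ∑ k ∈ Finset.univ.erase i, |s k| :=
      Finset.sum_nonneg fun k _ => abs_nonneg (s k)
    have hz : ∑ k ∈ Finset.univ.erase i, |s k| = 0 := by omega
    have := (Finset.sum_eq_zero_iff_of_nonneg (fun k _ => abs_nonneg (s k))).mp hz j
      (Finset.mem_erase.mpr ⟨hj, Finset.mem_univ j⟩)
    exact abs_eq_zero.mp this

/-- The region map. -/
def r {d : ℕ} (n : Fin d → ℕ) (V : ℕ) (p : Fin d → ℤ) : Fin d → ℤ :=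
  fun i => rfun (n i) V (p i)

/-- The step chosen by the zero-memory agent at `p`. -/
def st {d : ℕ} (A : Agent d 0) (n : Fin d → ℕ) (V : ℕ) (p : Fin d → ℤ) : Fin d → ℤ :=
  (A.act (sense (grid n) V p) default).1

/-- One move of the agent. -/
def f {d : ℕ} (A : Agent d 0) (n : Fin d → ℕ) (V : ℕ) (p : Fin d → ℤ) : Fin d → ℤ :=
  p + st A n V p

open Classical in
/-- The induced region dynamics. -/
noncomputable def g {d : ℕ} (A : Agent d 0) (n : Fin d → ℕ) (V : ℕ)
    (R : Fin d → ℤ) : Fin d → ℤ :=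
  if h : ∃ q, q ∈ grid n ∧ r n V q = R then R + st A n V h.choose else R

end NP

end AuxNP

/-- If `∏ i, min (n i) (2V + 1)` is odd then no agent algorithm with
`0` bits of memory and sensing range `V` patrols the grid `[n 0] × ⋯ × [n (d-1)]`. -/
theorem no_zero_bit_patrol_of_odd_region_count {d : ℕ} (hd : 1 ≤ d) (n : Fin d → ℕ)
    (hn : ∀ i, 2 ≤ n i) (V : ℕ) (hV : 1 ≤ V)
    (hodd : Odd (∏ i, min (n i) (2 * V + 1))) :
    ¬ ∃ A : Agent d 0, A.Patrols (grid n) V := by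
  classical
  rintro ⟨A, hval, hpat⟩
  set D : Set (Fin d → ℤ) := grid n with hDdef
  have hgridmem : ∀ p : Fin d → ℤ, p ∈ D ↔ ∀ i, 1 ≤ p i ∧ p i ≤ (n i : ℤ) := fun p => Iff.rfl
  have hfD : ∀ p ∈ D, NP.f A n V p ∈ D := fun p hp => ((hval p hp default).2).1
  have hst1 : ∀ p ∈ D, manhattan (NP.st A n V p) = 1 := fun p hp => (hval p hp default).1
  have hiter : ∀ p ∈ D, ∀ t, (NP.f A n V)^[t] p ∈ D := by
    intro p hp t
    induction t with
    | zero => exact hp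
    | succ t ih => rw [Function.iterate_succ_apply']; exact hfD _ ih
  have hsense_sub : ∀ p ∈ D, ∀ p' ∈ D, NP.r n V p = NP.r n V p' →
      sense D V p ⊆ sense D V p' := by
    intro p hp p' hp' hr q hq
    obtain ⟨hqD, hqV⟩ := hq
    refine ⟨?_, hqV⟩
    have hmem : ∀ i, 1 ≤ p i + q i ∧ p i + q i ≤ (n i : ℤ) := by
      intro i
      have := (hgridmem (p + q)).mp hqD i
      simpa using this
    rw [hgridmem]
    intro i
    have ha := abs_le.mp ((NP.abs_le_manhattan q i).trans hqV)
    have h1 := NP.rfun_sense (n i) V (congrFun hr i)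
    have h2 := hmem i
    have h3 := (hgridmem p).mp hp i
    have h4 := (hgridmem p').mp hp' i
    simp only [Pi.add_apply]
    omega
  have hsteq : ∀ p ∈ D, ∀ p' ∈ D, NP.r n V p = NP.r n V p' →
      NP.st A n V p = NP.st A n V p' := by
    intro p hp p' hp' hr
    have hse : sense D V p = sense D V p' :=
      Set.Subset.antisymm (hsense_sub p hp p' hp' hr) (hsense_sub p' hp' p hp hr.symm)
    show (A.act (sense (grid n) V p) default).1 = (A.act (sense (grid n) V p') default).1
    rw [show sense (grid n) V p = sense (grid n) V p' from hse]
  have htraj : ∀ (v : Fin d → ℤ) (m : Fin 0 → Bool) (t : ℕ),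
      (A.traj D V v m t).1 = (NP.f A n V)^[t] v := by
    intro v m t
    induction t with
    | zero => rfl
    | succ t ih =>
      rw [Function.iterate_succ_apply']
      show (A.traj D V v m t).1 + (A.act (sense D V (A.traj D V v m t).1) (A.traj D V v m t).2).1
        = NP.f A n V ((NP.f A n V)^[t] v)
      rw [Subsingleton.elim (A.traj D V v m t).2 default, ih]
      rfl
  have hcover : ∀ p ∈ D, ∀ u ∈ D, ∃ t, (NP.f A n V)^[t] p = u := by
    intro p hp u hu
    obtain ⟨t, ht⟩ := hpat p hp default u hu
    exact ⟨t, by rw [← htraj p default t]; exact ht⟩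
  have hrstep : ∀ p ∈ D, NP.r n V (NP.f A n V p) = NP.r n V p ∨
      NP.r n V (NP.f A n V p) = NP.r n V p + NP.st A n V p := by
    intro p hp
    obtain ⟨i0, hsi, hz⟩ := NP.unit_step (hst1 p hp)
    have hco : ∀ j, j ≠ i0 → NP.r n V (NP.f A n V p) j = NP.r n V p j := by
      intro j hj
      show NP.rfun (n j) V ((p + NP.st A n V p) j) = NP.rfun (n j) V (p j)
      rw [Pi.add_apply, hz j hj, add_zero]
    have hi0 : NP.r n V (NP.f A n V p) i0 = NP.r n V p i0 ∨
        NP.r n V (NP.f A n V p) i0 = NP.r n V p i0 + NP.st A n V p i0 := by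
      show NP.rfun (n i0) V ((p + NP.st A n V p) i0) = NP.rfun (n i0) V (p i0) ∨
        NP.rfun (n i0) V ((p + NP.st A n V p) i0) = NP.rfun (n i0) V (p i0) + NP.st A n V p i0
      rw [Pi.add_apply]
      rcases hsi with h | h <;> rw [h]
      · exact NP.rfun_step (n i0) V (p i0)
      · rw [show p i0 + (-1 : ℤ) = p i0 - 1 from by ring]
        rcases NP.rfun_sub (n i0) V (p i0) with h' | h'
        · exact Or.inl h'
        · exact Or.inr (by omega)
    rcases hi0 with h | h
    · left; funext j
      by_cases hj : j = i0
      · subst hj; exact h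
      · exact hco j hj
    · right; funext j
      by_cases hj : j = i0
      · subst hj; exact h
      · rw [Pi.add_apply, hz j hj, add_zero]; exact hco j hj
  have hstsum : ∀ p ∈ D, (∑ i, NP.st A n V p i) = 1 ∨ (∑ i, NP.st A n V p i) = -1 := by
    intro p hp
    obtain ⟨i0, hsi, hz⟩ := NP.unit_step (hst1 p hp)
    have hs : ∑ i, NP.st A n V p i = NP.st A n V p i0 :=
      Finset.sum_eq_single_of_mem i0 (Finset.mem_univ i0) (fun j _ hj => hz j hj)
    rw [hs]; exact hsi
  have hgWD : ∀ p ∈ D, NP.g A n V (NP.r n V p) = NP.r n V p + NP.st A n V p := by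
    intro p hp
    have h : ∃ q, q ∈ grid n ∧ NP.r n V q = NP.r n V p := ⟨p, hp, rfl⟩
    simp only [NP.g]
    rw [dif_pos h]
    congr 1
    exact hsteq _ h.choose_spec.1 _ hp h.choose_spec.2
  have htrack : ∀ p ∈ D, ∀ t, ∃ k, (NP.g A n V)^[k] (NP.r n V p) = NP.r n V ((NP.f A n V)^[t] p) := by
    intro p hp t
    induction t with
    | zero => exact ⟨0, rfl⟩
    | succ t ih =>
      obtain ⟨k, hk⟩ := ih
      have hpt := hiter p hp t
      rw [Function.iterate_succ_apply']
      rcases hrstep _ hpt with h | h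
      · exact ⟨k, by rw [h]; exact hk⟩
      · refine ⟨k+1, ?_⟩
        rw [Function.iterate_succ_apply', hk, h, hgWD _ hpt]
  have hclosure : ∀ p ∈ D, ∃ q, q ∈ D ∧ NP.r n V q = NP.g A n V (NP.r n V p) := by
    intro p hp
    have hne : ∃ j, NP.r n V ((NP.f A n V)^[j] p) ≠ NP.r n V p := by
      by_contra hcon
      push_neg at hcon
      obtain ⟨i0, hsi, hz⟩ := NP.unit_step (hst1 p hp)
      have hline : ∀ j : ℕ, ((NP.f A n V)^[j] p) i0 = p i0 + j * NP.st A n V p i0 := by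
        intro j
        induction j with
        | zero => simp
        | succ j ih =>
          rw [Function.iterate_succ_apply']
          have hst' : NP.st A n V ((NP.f A n V)^[j] p) = NP.st A n V p :=
            hsteq _ (hiter p hp j) _ hp (hcon j)
          show ((NP.f A n V)^[j] p + NP.st A n V ((NP.f A n V)^[j] p)) i0 = _
          rw [Pi.add_apply, hst', ih]
          push_cast
          ring
      have hin := (hgridmem _).mp (hiter p hp (n i0 + 1)) i0
      have hb0 := (hgridmem p).mp hp i0
      have hl := hline (n i0 + 1)
      rcases hsi with h | h <;> rw [h] at hl <;> push_cast at hl <;> omega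
    have hkspec : NP.r n V ((NP.f A n V)^[Nat.find hne] p) ≠ NP.r n V p := Nat.find_spec hne
    have hkpos : Nat.find hne ≠ 0 := by
      intro h0
      rw [h0] at hkspec
      exact hkspec rfl
    obtain ⟨k', hk'⟩ : ∃ k', Nat.find hne = k' + 1 := ⟨Nat.find hne - 1, by omega⟩
    have hprev : NP.r n V ((NP.f A n V)^[k'] p) = NP.r n V p := by
      by_contra hc
      exact Nat.find_min hne (show k' < Nat.find hne from by omega) hc
    have hk'D := hiter p hp k'
    refine ⟨(NP.f A n V)^[k'+1] p, hiter p hp (k'+1), ?_⟩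
    rw [Function.iterate_succ_apply']
    rcases hrstep _ hk'D with h | h
    · exfalso
      apply hkspec
      rw [hk', Function.iterate_succ_apply', h, hprev]
    · rw [h, hsteq _ hk'D _ hp hprev, hprev, hgWD p hp]
  have hgiter : ∀ p ∈ D, ∀ k, ∃ q, q ∈ D ∧ NP.r n V q = (NP.g A n V)^[k] (NP.r n V p) := by
    intro p hp k
    induction k with
    | zero => exact ⟨p, hp, rfl⟩
    | succ k ih =>
      obtain ⟨q, hq, hrq⟩ := ih
      obtain ⟨q', hq', hrq'⟩ := hclosure q hq
      exact ⟨q', hq', by rw [hrq', hrq]; exact (Function.iterate_succ_apply' _ _ _).symm⟩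
  -- the finite set of regions
  have hmemRegF : ∀ p ∈ D, NP.r n V p ∈
      Fintype.piFinset (fun i => Finset.Icc (0:ℤ) (NP.mI (n i) V - 1)) := by
    intro p hp
    rw [Fintype.mem_piFinset]
    intro i
    have := NP.rfun_bounds (n i) V ((hgridmem p).mp hp i).1 ((hgridmem p).mp hp i).2
    rw [Finset.mem_Icc]
    exact this
  have hRegFcard : (Fintype.piFinset (fun i => Finset.Icc (0:ℤ) (NP.mI (n i) V - 1))).card
      = ∏ i, min (n i) (2 * V + 1) := by
    rw [Fintype.card_piFinset]
    refine Finset.prod_congr rfl fun i _ => ?_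
    rw [Int.card_Icc]
    unfold NP.mI
    omega
  have hRegFsub : ∀ R ∈ Fintype.piFinset (fun i => Finset.Icc (0:ℤ) (NP.mI (n i) V - 1)),
      ∃ p, p ∈ D ∧ NP.r n V p = R := by
    intro R hR
    rw [Fintype.mem_piFinset] at hR
    have h' : ∀ i, ∃ x : ℤ, 1 ≤ x ∧ x ≤ (n i : ℤ) ∧ NP.rfun (n i) V x = R i := by
      intro i
      have := Finset.mem_Icc.mp (hR i)
      exact NP.rfun_surj (n i) V this.1 this.2
    choose x h1 h2 h3 using h'
    refine ⟨x, ?_, funext h3⟩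
    rw [hgridmem]
    exact fun i => ⟨h1 i, h2 i⟩
  have hw : (fun _ => (1:ℤ)) ∈ D := by
    rw [hgridmem]
    intro i
    have := hn i
    constructor
    · exact le_refl 1
    · omega
  have main : ∀ a b : ℕ, a < b →
      (NP.g A n V)^[a] (NP.r n V (fun _ => (1:ℤ))) = (NP.g A n V)^[b] (NP.r n V (fun _ => (1:ℤ)))
      → False := by
    intro a b hab heq
    set R₁ := (NP.g A n V)^[a] (NP.r n V (fun _ => (1:ℤ))) with hR1def
    have hc' : (NP.g A n V)^[b - a] R₁ = R₁ := by
      rw [hR1def, ← Function.iterate_add_apply, show b - a + a = b from by omega, ← heq]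
    have hPex : ∃ t, (NP.g A n V)^[t+1] R₁ = R₁ :=
      ⟨b - a - 1, by rw [show b - a - 1 + 1 = b - a from by omega]; exact hc'⟩
    have hc : (NP.g A n V)^[Nat.find hPex + 1] R₁ = R₁ := Nat.find_spec hPex
    set c := Nat.find hPex + 1 with hcdef
    have hcpos : 0 < c := by omega
    have hmin : ∀ j, 0 < j → j < c → (NP.g A n V)^[j] R₁ ≠ R₁ := by
      intro j hj1 hj2 hje
      exact Nat.find_min hPex (show j - 1 < Nat.find hPex from by omega)
        (by rw [show j - 1 + 1 = j from by omega]; exact hje)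
    have hmul : ∀ q : ℕ, (NP.g A n V)^[c * q] R₁ = R₁ := by
      intro q
      induction q with
      | zero => simp
      | succ q ih => rw [Nat.mul_succ, Function.iterate_add_apply, hc, ih]
    have hmod : ∀ k : ℕ, (NP.g A n V)^[k] R₁ = (NP.g A n V)^[k % c] R₁ := by
      intro k
      conv_lhs => rw [← Nat.mod_add_div k c]
      rw [Function.iterate_add_apply, hmul]
    obtain ⟨p₁, hp₁, hrp₁⟩ := hgiter _ hw a
    rw [← hR1def] at hrp₁
    have hcov : ∀ R ∈ Fintype.piFinset (fun i => Finset.Icc (0:ℤ) (NP.mI (n i) V - 1)),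
        ∃ j, j < c ∧ (NP.g A n V)^[j] R₁ = R := by
      intro R hR
      obtain ⟨u, hu, hru⟩ := hRegFsub R hR
      obtain ⟨t, ht⟩ := hcover p₁ hp₁ u hu
      obtain ⟨k, hk⟩ := htrack p₁ hp₁ t
      rw [hrp₁, ht, hru] at hk
      exact ⟨k % c, Nat.mod_lt _ hcpos, by rw [← hmod]; exact hk⟩
    have hinj2 : ∀ j1 j2, j1 < j2 → j2 < c →
        (NP.g A n V)^[j1] R₁ ≠ (NP.g A n V)^[j2] R₁ := by
      intro j1 j2 h12 h2c hje
      have h3 : (NP.g A n V)^[c - j2 + j1] R₁ = R₁ := by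
        have h4 : (NP.g A n V)^[c - j2 + j1] R₁ = (NP.g A n V)^[c - j2 + j2] R₁ := by
          rw [Function.iterate_add_apply, Function.iterate_add_apply, hje]
        rw [h4, show c - j2 + j2 = c from by omega]
        exact hc
      exact hmin _ (by omega) (by omega) h3
    have hInj : Set.InjOn (fun j => (NP.g A n V)^[j] R₁) ↑(Finset.range c) := by
      intro j1 hj1 j2 hj2 hje
      simp only [Finset.coe_range, Set.mem_Iio] at hj1 hj2
      by_contra hne
      rcases Nat.lt_or_ge j1 j2 with h | h
      · exact hinj2 j1 j2 h hj2 hje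
      · exact hinj2 j2 j1 (by omega) hj1 hje.symm
    have himg : Finset.image (fun j => (NP.g A n V)^[j] R₁) (Finset.range c)
        = Fintype.piFinset (fun i => Finset.Icc (0:ℤ) (NP.mI (n i) V - 1)) := by
      apply Finset.Subset.antisymm
      · intro R hR
        obtain ⟨j, hj, hje⟩ := Finset.mem_image.mp hR
        obtain ⟨q, hq, hrq⟩ := hgiter _ hw (j + a)
        rw [Function.iterate_add_apply, ← hR1def] at hrq
        have hqR : NP.r n V q = R := by rw [hrq]; exact hje
        rw [← hqR]
        exact hmemRegF q hq
      · intro R hR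
        obtain ⟨j, hj, hje⟩ := hcov R hR
        exact Finset.mem_image.mpr ⟨j, Finset.mem_range.mpr hj, hje⟩
    have hcardc : c = ∏ i, min (n i) (2 * V + 1) := by
      have h1 := Finset.card_image_of_injOn hInj
      rw [himg, hRegFcard, Finset.card_range] at h1
      omega
    have hflip : ∀ k : ℕ, ∃ e : ℤ, (e = 1 ∨ e = -1) ∧
        (∑ i, ((NP.g A n V)^[k+1] R₁) i) = (∑ i, ((NP.g A n V)^[k] R₁) i) + e := by
      intro k
      obtain ⟨q, hq, hrq⟩ := hgiter _ hw (k + a)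
      rw [Function.iterate_add_apply, ← hR1def] at hrq
      refine ⟨∑ i, NP.st A n V q i, hstsum q hq, ?_⟩
      rw [Function.iterate_succ_apply', ← hrq, hgWD q hq]
      simp only [Pi.add_apply]
      rw [Finset.sum_add_distrib]
    have hpar : ∀ k : ℕ,
        ((∑ i, ((NP.g A n V)^[k] R₁) i) - (∑ i, R₁ i) + (k:ℤ)) % 2 = 0 := by
      intro k
      induction k with
      | zero => simp
      | succ k ih =>
        obtain ⟨e, he, hs⟩ := hflip k
        rw [hs]
        push_cast
        rcases he with rfl | rfl <;> omega
    have hfin := hpar c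
    rw [hc] at hfin
    rw [hcardc] at hfin
    rw [Nat.odd_iff] at hodd
    omega
  obtain ⟨a, _, b, _, hab, heq⟩ :=
    Finset.exists_ne_map_eq_of_card_lt_of_maps_to (s := Finset.range (∏ i, min (n i) (2*V+1) + 1))
      (t := Fintype.piFinset (fun i => Finset.Icc (0:ℤ) (NP.mI (n i) V - 1)))
      (f := fun k => (NP.g A n V)^[k] (NP.r n V (fun _ => (1:ℤ))))
      (by rw [Finset.card_range, hRegFcard]; omega)
      (fun k _ => by
        obtain ⟨q, hq, hrq⟩ := hgiter _ hw k
        show (NP.g A n V)^[k] (NP.r n V fun _ => (1:ℤ)) ∈ _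
        rw [← hrq]
        exact hmemRegF q hq)
  rcases hab.lt_or_gt with h | h
  · exact main a b h heq
  · exact main b a h heq.symm
end

section
/- Let 𝒟 = [n_1] × … × [n_d] be a d-dimensional grid graph (all n_i ≥ 2) and let V ≥ 1. If there exist distinct indices i ≠ j with n_i > 2V + 1 and n_j > 2V + 1, then no agent algorithm with 0 bits of memory and sensing range V patrols 𝒟. -/
open Finset

namespace ZeroBitAux

variable {d : ℕ}

lemma abs_le_manhattan (q : Fin d → ℤ) (k : Fin d) : |q k| ≤ manhattan q :=
  Finset.single_le_sum (fun m _ => abs_nonneg (q m)) (Finset.mem_univ k)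

lemma unit_char {s : Fin d → ℤ} (h : manhattan s = 1) {k : Fin d} (hk : s k ≠ 0) :
    s = Pi.single k (s k) ∧ |s k| = 1 := by
  have hle : |s k| ≤ 1 := by rw [← h]; exact abs_le_manhattan s k
  have h1 : 1 ≤ |s k| := Int.one_le_abs hk
  have habs : |s k| = 1 := le_antisymm hle h1
  have hsum : ∑ m, |s m| = 1 := h
  have herase : ∑ m ∈ Finset.univ.erase k, |s m| = 0 := by
    have hh := Finset.add_sum_erase Finset.univ (fun m => |s m|) (Finset.mem_univ k)
    linarith [hh, habs, hsum]
  have hzero : ∀ m ∈ Finset.univ.erase k, |s m| = 0 :=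
    (Finset.sum_eq_zero_iff_of_nonneg (fun m _ => abs_nonneg _)).1 herase
  refine ⟨funext fun m => ?_, habs⟩
  by_cases hm : m = k
  · subst hm; simp
  · have h0 : |s m| = 0 := hzero m (Finset.mem_erase.2 ⟨hm, Finset.mem_univ m⟩)
    rw [Pi.single_eq_of_ne hm, abs_eq_zero.1 h0]

lemma mem_grid {n : Fin d → ℕ} {p : Fin d → ℤ} :
    p ∈ grid n ↔ ∀ i, 1 ≤ p i ∧ p i ≤ (n i : ℤ) := Iff.rfl

lemma mem_sense {D : Set (Fin d → ℤ)} {V : ℕ} {p q : Fin d → ℤ} :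
    q ∈ sense D V p ↔ p + q ∈ D ∧ manhattan q ≤ (V : ℤ) := Iff.rfl

lemma grid_add_single {n : Fin d → ℕ} {p : Fin d → ℤ} (hp : p ∈ grid n) (j : Fin d) (c : ℤ)
    (h1 : 1 ≤ p j + c) (h2 : p j + c ≤ (n j : ℤ)) : p + Pi.single j c ∈ grid n := by
  rw [mem_grid]
  intro k
  by_cases hk : k = j
  · subst hk
    simpa [Pi.add_apply, Pi.single_eq_same] using ⟨h1, h2⟩
  · simpa [Pi.add_apply, Pi.single_eq_of_ne hk] using hp k

lemma cancel_neg_one (x : Fin d → ℤ) (j : Fin d) :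
    x + Pi.single j (-1) + Pi.single j 1 = x := by
  funext k
  by_cases hk : k = j
  · subst hk; simp
  · simp [Pi.single_eq_of_ne hk]

lemma cancel_one (x : Fin d → ℤ) (j : Fin d) :
    x + Pi.single j 1 + Pi.single j (-1) = x := by
  funext k
  by_cases hk : k = j
  · subst hk; simp
  · simp [Pi.single_eq_of_ne hk]

/-- Key sensing lemma: shifting a point one step up in a "deep" coordinate does
not change its sensing data. -/
lemma sense_shift {n : Fin d → ℕ} {V : ℕ} {j : Fin d} {p : Fin d → ℤ}
    (h1 : (V : ℤ) + 1 ≤ p j) (h2 : p j + (V : ℤ) + 1 ≤ (n j : ℤ)) :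
    sense (grid n) V (p + Pi.single j 1) = sense (grid n) V p := by
  ext q
  simp only [mem_sense, mem_grid]
  constructor
  · rintro ⟨hg, hm⟩
    have hq : |q j| ≤ (V : ℤ) := le_trans (abs_le_manhattan q j) hm
    obtain ⟨hq1, hq2⟩ := abs_le.1 hq
    refine ⟨fun k => ?_, hm⟩
    by_cases hk : k = j
    · subst hk
      simp only [Pi.add_apply]
      constructor <;> linarith
    · have hgk := hg k
      simpa [Pi.add_apply, Pi.single_eq_of_ne hk] using hgk
  · rintro ⟨hg, hm⟩
    have hq : |q j| ≤ (V : ℤ) := le_trans (abs_le_manhattan q j) hm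
    obtain ⟨hq1, hq2⟩ := abs_le.1 hq
    refine ⟨fun k => ?_, hm⟩
    by_cases hk : k = j
    · subst hk
      simp only [Pi.add_apply, Pi.single_eq_same]
      constructor <;> linarith
    · have hgk := hg k
      simpa [Pi.add_apply, Pi.single_eq_of_ne hk] using hgk

end ZeroBitAux

open ZeroBitAux in
/-- If there are two distinct indices `i ≠ j` with `n i > 2V + 1` and
`n j > 2V + 1`, then no agent algorithm with `0` bits of memory and sensing range `V`
patrols the grid `[n 0] × ⋯ × [n (d-1)]`. -/
theorem no_zero_bit_patrol_of_two_large_dims {d : ℕ} (hd : 1 ≤ d) (n : Fin d → ℕ)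
    (hn : ∀ i, 2 ≤ n i) (V : ℕ) (hV : 1 ≤ V)
    (i j : Fin d) (hij : i ≠ j) (hi : 2 * V + 1 < n i) (hj : 2 * V + 1 < n j) :
    ¬ ∃ A : Agent d 0, A.Patrols (grid n) V := by
  rintro ⟨A, hpat⟩
  classical
  obtain ⟨hval, hcov⟩ := hpat
  set m0 : Fin 0 → Bool := fun x => x.elim0 with hm0
  set σ : (Fin d → ℤ) → (Fin d → ℤ) := fun p => (A.act (sense (grid n) V p) m0).1 with hσ
  set F : (Fin d → ℤ) → (Fin d → ℤ) := fun p => p + σ p with hF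
  have hV' : 1 ≤ (V : ℤ) := by exact_mod_cast hV
  have hσ1 : ∀ p ∈ grid n, manhattan (σ p) = 1 := fun p hp => (hval p hp m0).1
  have hFmem : ∀ p ∈ grid n, F p ∈ grid n := by
    intro p hp
    have h := (hval p hp m0).2
    exact (mem_sense.1 h).1
  have hσcongr : ∀ p p', sense (grid n) V p = sense (grid n) V p' → σ p = σ p' := by
    intro p p' h
    simp only [hσ]
    rw [h]
  have htraj : ∀ (v : Fin d → ℤ) (m : Fin 0 → Bool) (t : ℕ),
      (A.traj (grid n) V v m t).1 = F^[t] v := by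
    intro v m t
    induction t with
    | zero => rfl
    | succ t ih =>
      have hm2 : (A.traj (grid n) V v m t).2 = m0 := funext fun x => x.elim0
      show (A.traj (grid n) V v m t).1 +
          (A.act (sense (grid n) V (A.traj (grid n) V v m t).1)
            (A.traj (grid n) V v m t).2).1 = F^[t+1] v
      rw [hm2, ih, Function.iterate_succ_apply']
  have hcov' : ∀ v₁ ∈ grid n, ∀ v ∈ grid n, ∃ t, F^[t] v₁ = v := by
    intro v₁ h₁ v hv
    obtain ⟨t, ht⟩ := hcov v₁ h₁ m0 v hv
    exact ⟨t, by rwa [htraj] at ht⟩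
  have hper : ∀ p ∈ grid n, ∃ a, 0 < a ∧ F^[a] p = p := by
    intro p hp
    obtain ⟨t, ht⟩ := hcov' (F p) (hFmem p hp) p hp
    exact ⟨t + 1, Nat.succ_pos t, by rwa [Function.iterate_succ_apply]⟩
  have hinj : ∀ p ∈ grid n, ∀ q ∈ grid n, F p = F q → p = q := by
    intro p hp q hq hpq
    obtain ⟨a, ha, hpa⟩ := hper p hp
    obtain ⟨b, hb, hqb⟩ := hper q hq
    have hNp : F^[a * b] p = p := by
      rw [Function.iterate_mul]
      exact Function.iterate_fixed hpa b
    have hNq : F^[a * b] q = q := by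
      rw [mul_comm, Function.iterate_mul]
      exact Function.iterate_fixed hqb a
    have hab : 0 < a * b := Nat.mul_pos ha hb
    obtain ⟨c, hc⟩ : ∃ c, a * b = c + 1 := ⟨a * b - 1, (Nat.succ_pred_eq_of_pos hab).symm⟩
    have h1 : F^[a * b] p = F^[a * b] q := by
      rw [hc, Function.iterate_succ_apply, Function.iterate_succ_apply, hpq]
    rw [hNp, hNq] at h1
    exact h1
  -- Key lemma: at any point deep in a large dimension j', the step moves in dimension j'.
  have key : ∀ (j' : Fin d), 2 * V + 1 < n j' →
      ∀ p ∈ grid n, (V : ℤ) + 1 ≤ p j' → p j' ≤ (n j' : ℤ) - V → σ p j' ≠ 0 := by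
    intro j' hnj p hp hd1 hd2 h0
    have hnj' : 2 * (V : ℤ) + 1 < (n j' : ℤ) := by exact_mod_cast hnj
    -- sideways-step invariance
    have hstep : ∀ q ∈ grid n, (V : ℤ) + 1 ≤ q j' → q j' ≤ (n j' : ℤ) - V → σ q j' = 0 →
        σ (F q) j' = 0 := by
      intro q hq h1 h2 h0'
      have hrD : F q ∈ grid n := hFmem q hq
      set r : Fin d → ℤ := F q with hr
      have hrj : r j' = q j' := by
        simp only [hr, hF, Pi.add_apply, h0', add_zero]
      by_contra hne
      obtain ⟨hsingle, habs⟩ := unit_char (hσ1 r hrD) hne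
      rcases (abs_eq (by norm_num : (0:ℤ) ≤ 1)).1 habs with hup | hdn
      · -- step at r is +e_{j'}
        rw [hup] at hsingle
        by_cases hcase : q j' ≤ (n j' : ℤ) - V - 1
        · -- collision between r and q + e_{j'}
          have hq'D : q + Pi.single j' 1 ∈ grid n :=
            grid_add_single hq j' 1 (by linarith) (by linarith)
          have hsσ : σ (q + Pi.single j' 1) = σ q :=
            hσcongr _ _ (sense_shift h1 (by linarith))
          have hFq' : F (q + Pi.single j' 1) = r + Pi.single j' 1 := by
            simp only [hF]
            rw [hsσ, hr]
            simp only [hF]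
            rw [add_right_comm]
          have hFr : F r = r + Pi.single j' 1 := by
            simp only [hF]
            rw [hsingle]
          have heq := hinj _ hq'D _ hrD (hFq'.trans hFr.symm)
          have hcj := congrFun heq j'
          simp only [Pi.add_apply, Pi.single_eq_same] at hcj
          rw [hrj] at hcj
          linarith
        · -- q j' = n j' - V ; collision between q and r - e_{j'}
          have hqj : q j' = (n j' : ℤ) - V := by
            have := not_le.1 hcase
            linarith
          have hrjv : r j' = (n j' : ℤ) - V := by rw [hrj, hqj]
          have hr'D : r + Pi.single j' (-1) ∈ grid n :=
            grid_add_single hrD j' (-1) (by linarith) (by linarith)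
          have hsσ : σ (r + Pi.single j' (-1)) = σ r := by
            apply hσcongr
            have hs := sense_shift (n := n) (V := V) (j := j') (p := r + Pi.single j' (-1))
              (by simp only [Pi.add_apply, Pi.single_eq_same, hrjv]; linarith)
              (by simp only [Pi.add_apply, Pi.single_eq_same, hrjv]; linarith)
            rw [cancel_neg_one] at hs
            exact hs.symm
          have hFr' : F (r + Pi.single j' (-1)) = r := by
            simp only [hF]
            rw [hsσ, hsingle, cancel_neg_one]
          have heq := hinj _ hq _ hr'D (hFr'.symm)
          have hcj := congrFun heq j'
          simp only [Pi.add_apply, Pi.single_eq_same] at hcj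
          rw [hqj, hrjv] at hcj
          linarith
      · -- step at r is -e_{j'}
        rw [hdn] at hsingle
        by_cases hcase : (V : ℤ) + 2 ≤ q j'
        · -- collision between r and q - e_{j'}
          have hq'D : q + Pi.single j' (-1) ∈ grid n :=
            grid_add_single hq j' (-1) (by linarith) (by linarith)
          have hsσ : σ (q + Pi.single j' (-1)) = σ q := by
            apply hσcongr
            have hs := sense_shift (n := n) (V := V) (j := j') (p := q + Pi.single j' (-1))
              (by simp only [Pi.add_apply, Pi.single_eq_same]; linarith)
              (by simp only [Pi.add_apply, Pi.single_eq_same]; linarith)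
            rw [cancel_neg_one] at hs
            exact hs.symm
          have hFq' : F (q + Pi.single j' (-1)) = r + Pi.single j' (-1) := by
            simp only [hF]
            rw [hsσ, hr]
            simp only [hF]
            rw [add_right_comm]
          have hFr : F r = r + Pi.single j' (-1) := by
            simp only [hF]
            rw [hsingle]
          have heq := hinj _ hq'D _ hrD (hFq'.trans hFr.symm)
          have hcj := congrFun heq j'
          simp only [Pi.add_apply, Pi.single_eq_same] at hcj
          rw [hrj] at hcj
          linarith
        · -- q j' = V + 1 ; collision between q and r + e_{j'}
          have hqj : q j' = (V : ℤ) + 1 := by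
            have := not_le.1 hcase
            linarith
          have hrjv : r j' = (V : ℤ) + 1 := by rw [hrj, hqj]
          have hr'D : r + Pi.single j' 1 ∈ grid n :=
            grid_add_single hrD j' 1 (by linarith) (by linarith)
          have hsσ : σ (r + Pi.single j' 1) = σ r :=
            hσcongr _ _ (sense_shift (by rw [hrjv]) (by rw [hrjv]; linarith))
          have hFr' : F (r + Pi.single j' 1) = r := by
            simp only [hF]
            rw [hsσ, hsingle, cancel_one]
          have heq := hinj _ hq _ hr'D (hFr'.symm)
          have hcj := congrFun heq j'
          simp only [Pi.add_apply, Pi.single_eq_same] at hcj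
          rw [hqj, hrjv] at hcj
          linarith
    -- the orbit of p stays deep in dimension j'
    have horb : ∀ t, F^[t] p ∈ grid n ∧
        ((V : ℤ) + 1 ≤ (F^[t] p) j' ∧ (F^[t] p) j' ≤ (n j' : ℤ) - V) ∧ σ (F^[t] p) j' = 0 := by
      intro t
      induction t with
      | zero => exact ⟨hp, ⟨hd1, hd2⟩, h0⟩
      | succ t ih =>
        obtain ⟨hqD, ⟨h1, h2⟩, h0'⟩ := ih
        have hiter : F^[t+1] p = F (F^[t] p) := Function.iterate_succ_apply' F t p
        have hj2 : (F^[t+1] p) j' = (F^[t] p) j' := by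
          rw [hiter]
          show (F^[t] p) j' + σ (F^[t] p) j' = (F^[t] p) j'
          rw [h0', add_zero]
        refine ⟨by rw [hiter]; exact hFmem _ hqD, ⟨by rw [hj2]; exact h1, by rw [hj2]; exact h2⟩, ?_⟩
        rw [hiter]
        exact hstep _ hqD h1 h2 h0'
    -- but the orbit must reach the all-ones vertex
    have hone : (fun _ => (1 : ℤ)) ∈ grid n := by
      rw [mem_grid]
      intro k
      refine ⟨le_refl 1, ?_⟩
      have := hn k
      exact_mod_cast Nat.le_of_succ_le this
    obtain ⟨t, ht⟩ := hcov' p hp _ hone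
    have hlow := (horb t).2.1.1
    rw [ht] at hlow
    simp only [] at hlow
    linarith
  -- apply the key lemma in both large dimensions at a doubly-deep point
  set pstar : Fin d → ℤ := fun k => if k = i ∨ k = j then ((V : ℤ) + 1) else 1 with hpstar
  have hi' : 2 * (V : ℤ) + 1 < (n i : ℤ) := by exact_mod_cast hi
  have hj' : 2 * (V : ℤ) + 1 < (n j : ℤ) := by exact_mod_cast hj
  have hpD : pstar ∈ grid n := by
    rw [mem_grid]
    intro k
    by_cases hk : k = i ∨ k = j
    · simp only [hpstar, if_pos hk]
      refine ⟨by linarith, ?_⟩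
      rcases hk with hk | hk <;> subst hk
      · linarith
      · linarith
    · simp only [hpstar, if_neg hk]
      refine ⟨le_refl 1, ?_⟩
      have := hn k
      exact_mod_cast Nat.le_of_succ_le this
  have hpi : pstar i = (V : ℤ) + 1 := by simp [hpstar]
  have hpj : pstar j = (V : ℤ) + 1 := by simp [hpstar]
  have hki : σ pstar i ≠ 0 := key i hi pstar hpD (by rw [hpi]) (by rw [hpi]; linarith)
  have hkj : σ pstar j ≠ 0 := key j hj pstar hpD (by rw [hpj]) (by rw [hpj]; linarith)
  have hm1 : manhattan (σ pstar) = 1 := hσ1 _ hpD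
  have h2le : |σ pstar i| + |σ pstar j| ≤ manhattan (σ pstar) := by
    have hpair : |σ pstar i| + |σ pstar j| = ∑ k ∈ ({i, j} : Finset (Fin d)), |σ pstar k| :=
      (Finset.sum_pair (f := fun k => |σ pstar k|) hij).symm
    rw [hpair]
    exact Finset.sum_le_sum_of_subset_of_nonneg (Finset.subset_univ _)
      (fun k _ _ => abs_nonneg _)
  have hai := Int.one_le_abs hki
  have haj := Int.one_le_abs hkj
  linarith
end

section
/- Let 𝒟 = [n_1] × … × [n_d] be a d-dimensional grid graph (all n_i ≥ 2) and let V ≥ 1. The sensing region graph 𝒮(𝒟, V) is isomorphic (as a graph) to the d-dimensional grid graph [m_1] × … × [m_d], where m_i := min(n_i, 2V + 1). -/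
open Finset

/-- The sensing-equivalence relation on the vertices of `𝒟`: two vertices are
equivalent iff they have the same sensing data. Its classes are the sensing regions. -/
def senseSetoid {d : ℕ} (n : Fin d → ℕ) (V : ℕ) : Setoid (grid n) where
  r p q := sense (grid n) V p.1 = sense (grid n) V q.1
  iseqv := ⟨fun _ => rfl, Eq.symm, Eq.trans⟩

/-- The sensing region graph `𝒮(𝒟, V)`: vertices are the sensing regions, with an
edge between two distinct regions iff some representatives are adjacent in `𝒟`. -/
def senseGraph {d : ℕ} (n : Fin d → ℕ) (V : ℕ) :
    SimpleGraph (Quotient (senseSetoid n V)) where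
  Adj R R' := R ≠ R' ∧ ∃ p q : grid n,
    Quotient.mk (senseSetoid n V) p = R ∧ Quotient.mk (senseSetoid n V) q = R' ∧
    (gridGraph n).Adj p q
  symm := by
    constructor
    rintro R R' ⟨hne, p, q, hp, hq, hadj⟩
    exact ⟨hne.symm, q, p, hq, hp, hadj.symm⟩
  loopless := by
    constructor
    rintro R ⟨hne, -⟩
    exact hne rfl


section SGAux

/-- Per-coordinate compression map. -/
def zcomp (N V p : ℤ) : ℤ := max (min p (V+1)) (p + min N (2*V+1) - N)

lemma zcomp_bounds (N V p : ℤ) (hN : 2 ≤ N) (hV : 1 ≤ V) (h1 : 1 ≤ p) (h2 : p ≤ N) :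
    1 ≤ zcomp N V p ∧ zcomp N V p ≤ min N (2*V+1) := by unfold zcomp; omega

lemma zcomp_eq_iff (N V p p' : ℤ) :
    zcomp N V p = zcomp N V p' ↔
      (min p (V+1) = min p' (V+1) ∧ min (N - p) V = min (N - p') V) := by unfold zcomp; omega

lemma zcomp_step (N V p : ℤ) (hN : 2 ≤ N) (hV : 1 ≤ V) (h1 : 1 ≤ p) (h2 : p + 1 ≤ N) :
    zcomp N V p ≤ zcomp N V (p+1) ∧ zcomp N V (p+1) ≤ zcomp N V p + 1 := by unfold zcomp; omega

/-- Left-leaning representative. -/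
def lrep (N V q : ℤ) : ℤ := if q ≤ V + 1 then q else q + N - min N (2*V+1)

lemma lrep_spec (N V q : ℤ) (hN : 2 ≤ N) (hV : 1 ≤ V) (h1 : 1 ≤ q) (h2 : q ≤ min N (2*V+1)) :
    1 ≤ lrep N V q ∧ lrep N V q ≤ N ∧ zcomp N V (lrep N V q) = q := by
  unfold lrep zcomp; split <;> omega

/-- Right-leaning representative. -/
def rrep (N V q : ℤ) : ℤ := if q ≤ V then q else q + N - min N (2*V+1)

lemma rrep_spec (N V q : ℤ) (hN : 2 ≤ N) (hV : 1 ≤ V) (h1 : 1 ≤ q) (h2 : q + 1 ≤ min N (2*V+1)) :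
    1 ≤ rrep N V q ∧ rrep N V q + 1 ≤ N ∧ zcomp N V (rrep N V q) = q ∧
      zcomp N V (rrep N V q + 1) = q + 1 := by
  unfold rrep zcomp; split <;> omega

lemma manhattan_single {d : ℕ} (i : Fin d) (t : ℤ) : manhattan (Pi.single i t) = |t| := by
  unfold manhattan
  rw [Fintype.sum_eq_single i]
  · simp
  · intro j hj; simp [Pi.single_eq_of_ne hj]

lemma abs_le_manhattan {d : ℕ} (q : Fin d → ℤ) (i : Fin d) : |q i| ≤ manhattan q :=
  Finset.single_le_sum (fun j _ => abs_nonneg (q j)) (Finset.mem_univ i)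

lemma manhattan_eq_one_iff {d : ℕ} (x : Fin d → ℤ) :
    manhattan x = 1 ↔ ∃ i, |x i| = 1 ∧ ∀ j, j ≠ i → x j = 0 := by
  constructor
  · intro h
    by_cases hex : ∃ i, x i ≠ 0
    · obtain ⟨i, hi⟩ := hex
      have h1 : 1 ≤ |x i| := by
        have := abs_pos.mpr hi; omega
      have hsplit : |x i| + ∑ j ∈ Finset.univ.erase i, |x j| = 1 := by
        rw [Finset.add_sum_erase Finset.univ (fun j => |x j|) (Finset.mem_univ i)]; exact h
      have hnn := Finset.sum_nonneg (fun j (_ : j ∈ Finset.univ.erase i) => abs_nonneg (x j))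
      have hz : ∀ j ∈ Finset.univ.erase i, |x j| = 0 := by
        rw [← Finset.sum_eq_zero_iff_of_nonneg (fun j _ => abs_nonneg (x j))]
        omega
      exact ⟨i, by omega, fun j hj => abs_eq_zero.mp (hz j (Finset.mem_erase.mpr ⟨hj, Finset.mem_univ j⟩))⟩
    · push_neg at hex
      exfalso
      have : manhattan x = 0 := by
        unfold manhattan; exact Finset.sum_eq_zero (fun j _ => by rw [hex j, abs_zero])
      omega
  · rintro ⟨i, hi, hz⟩
    unfold manhattan
    rw [Fintype.sum_eq_single i]
    · exact hi
    · intro j hj; rw [hz j hj, abs_zero]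

lemma senseEq_iff {d : ℕ} (n : Fin d → ℕ) (V : ℕ) (p p' : Fin d → ℤ)
    (hp : p ∈ grid n) (hp' : p' ∈ grid n) :
    sense (grid n) V p = sense (grid n) V p' ↔
      ∀ i, min (p i) ((V : ℤ)+1) = min (p' i) ((V : ℤ)+1) ∧
        min ((n i : ℤ) - p i) (V : ℤ) = min ((n i : ℤ) - p' i) (V : ℤ) := by
  have hmem : ∀ r : Fin d → ℤ, r ∈ grid n → ∀ i, ∀ t : ℤ,
      (r + Pi.single i t ∈ grid n ↔ (1 ≤ r i + t ∧ r i + t ≤ (n i : ℤ))) := by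
    intro r hr i t
    constructor
    · intro hg; have := hg i; simpa using this
    · intro hti j
      by_cases hj : j = i
      · subst hj; simpa using hti
      · simpa [Pi.single_eq_of_ne hj] using hr j
  constructor
  · intro h i
    have key : ∀ t : ℤ, |t| ≤ (V : ℤ) →
        ((1 ≤ p i + t ∧ p i + t ≤ (n i : ℤ)) ↔ (1 ≤ p' i + t ∧ p' i + t ≤ (n i : ℤ))) := by
      intro t ht
      have h1 := Set.ext_iff.mp h (Pi.single i t)
      simp only [sense, Set.mem_setOf_eq, manhattan_single] at h1
      rw [hmem p hp i t, hmem p' hp' i t] at h1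
      constructor
      · intro hm; exact (h1.mp ⟨hm, ht⟩).1
      · intro hm; exact (h1.mpr ⟨hm, ht⟩).1
    have hpi := hp i; have hpi' := hp' i
    have A1 := key (1 - min (p i) ((V:ℤ)+1)) (abs_le.mpr (by omega))
    have A2 := key (1 - min (p' i) ((V:ℤ)+1)) (abs_le.mpr (by omega))
    have A3 := key (min ((n i : ℤ) - p i) (V:ℤ)) (abs_le.mpr (by omega))
    have A4 := key (min ((n i : ℤ) - p' i) (V:ℤ)) (abs_le.mpr (by omega))
    have B1 := A1.mp ⟨by omega, by omega⟩
    have B2 := A2.mpr ⟨by omega, by omega⟩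
    have B3 := A3.mp ⟨by omega, by omega⟩
    have B4 := A4.mpr ⟨by omega, by omega⟩
    omega
  · intro h
    ext q
    simp only [sense, Set.mem_setOf_eq]
    constructor <;> rintro ⟨hg, hq⟩ <;> refine ⟨fun i => ?_, hq⟩ <;>
    · have h1 := h i; have h2 := hp i; have h3 := hp' i; have h4 := hg i
      have h5 := abs_le.mp (le_trans (abs_le_manhattan q i) hq)
      simp only [Pi.add_apply] at h4 ⊢
      omega

variable {d : ℕ} (n : Fin d → ℕ) (V : ℕ)

/-- Equivalence in terms of the compression map. -/
lemma senseEq_iff_zcomp (p p' : Fin d → ℤ) (hp : p ∈ grid n) (hp' : p' ∈ grid n) :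
    sense (grid n) V p = sense (grid n) V p' ↔
      ∀ i, zcomp ((n i : ℤ)) (V : ℤ) (p i) = zcomp ((n i : ℤ)) (V : ℤ) (p' i) := by
  rw [senseEq_iff n V p p' hp hp']
  refine forall_congr' fun i => ?_
  rw [zcomp_eq_iff]

lemma phi_mem (hn : ∀ i, 2 ≤ n i) (hV : 1 ≤ V) (p : Fin d → ℤ) (hp : p ∈ grid n) :
    (fun i => zcomp ((n i : ℤ)) (V : ℤ) (p i)) ∈ grid (fun i => min (n i) (2 * V + 1)) := by
  intro i
  have hb := zcomp_bounds ((n i : ℤ)) (V : ℤ) (p i)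
    (by exact_mod_cast hn i) (by exact_mod_cast hV) (hp i).1 (hp i).2
  simp only
  omega

/-- The compression map as a map between grids. -/
def phiSub (hn : ∀ i, 2 ≤ n i) (hV : 1 ≤ V) : grid n → grid (fun i => min (n i) (2 * V + 1)) :=
  fun p => ⟨fun i => zcomp ((n i : ℤ)) (V : ℤ) (p.1 i), phi_mem n V hn hV p.1 p.2⟩

lemma phiSub_eq_iff (hn : ∀ i, 2 ≤ n i) (hV : 1 ≤ V) (p q : grid n) :
    phiSub n V hn hV p = phiSub n V hn hV q ↔
      sense (grid n) V p.1 = sense (grid n) V q.1 := by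
  rw [senseEq_iff_zcomp n V p.1 q.1 p.2 q.2]
  constructor
  · intro h i
    exact congrFun (congrArg Subtype.val h) i
  · intro h
    exact Subtype.ext (funext h)

/-- The compression map on sensing regions. -/
def Fmap (hn : ∀ i, 2 ≤ n i) (hV : 1 ≤ V) : Quotient (senseSetoid n V) → grid (fun i => min (n i) (2 * V + 1)) :=
  Quotient.lift (phiSub n V hn hV) (fun p q h => (phiSub_eq_iff n V hn hV p q).mpr h)

lemma Fmap_bijective (hn : ∀ i, 2 ≤ n i) (hV : 1 ≤ V) : Function.Bijective (Fmap n V hn hV) := by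
  constructor
  · intro a b
    induction a using Quotient.ind
    induction b using Quotient.ind
    intro h
    exact Quotient.sound ((phiSub_eq_iff n V hn hV _ _).mp h)
  · intro q
    have hLmem : (fun i => lrep ((n i : ℤ)) (V : ℤ) (q.1 i)) ∈ grid n := by
      intro i
      have hq := q.2 i
      have := lrep_spec ((n i : ℤ)) (V : ℤ) (q.1 i)
        (by exact_mod_cast hn i) (by exact_mod_cast hV) hq.1 (by
          have := hq.2; push_cast at this; omega)
      exact ⟨this.1, this.2.1⟩
    refine ⟨Quotient.mk _ ⟨_, hLmem⟩, ?_⟩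
    apply Subtype.ext
    funext i
    have hq := q.2 i
    have := lrep_spec ((n i : ℤ)) (V : ℤ) (q.1 i)
      (by exact_mod_cast hn i) (by exact_mod_cast hV) hq.1 (by
        have := hq.2; push_cast at this; omega)
    exact this.2.2

lemma adj_helper (hn : ∀ i, 2 ≤ n i) (hV : 1 ≤ V) (p q : grid n) (i : Fin d)
    (hstep : zcomp ((n i : ℤ)) (V : ℤ) (q.1 i) = zcomp ((n i : ℤ)) (V : ℤ) (p.1 i) + 1)
    (heq : ∀ j, j ≠ i → zcomp ((n j : ℤ)) (V : ℤ) (p.1 j) = zcomp ((n j : ℤ)) (V : ℤ) (q.1 j)) :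
    (senseGraph n V).Adj (Quotient.mk _ p) (Quotient.mk _ q) := by
  have hNi : (2:ℤ) ≤ (n i : ℤ) := by exact_mod_cast hn i
  have hVZ : (1:ℤ) ≤ (V:ℤ) := by exact_mod_cast hV
  set a : Fin d → ℤ := fun j => zcomp ((n j : ℤ)) (V : ℤ) (p.1 j) with ha
  have hai : 1 ≤ a i ∧ a i + 1 ≤ min ((n i : ℤ)) (2*(V:ℤ)+1) := by
    have h1 := zcomp_bounds ((n i : ℤ)) (V : ℤ) (p.1 i) hNi hVZ (p.2 i).1 (p.2 i).2
    have h2 := zcomp_bounds ((n i : ℤ)) (V : ℤ) (q.1 i) hNi hVZ (q.2 i).1 (q.2 i).2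
    constructor
    · exact h1.1
    · rw [ha]; simp only; omega
  have hrr := rrep_spec ((n i : ℤ)) (V : ℤ) (a i) hNi hVZ hai.1 hai.2
  have hlr : ∀ j, 1 ≤ lrep ((n j : ℤ)) (V : ℤ) (a j) ∧ lrep ((n j : ℤ)) (V : ℤ) (a j) ≤ (n j : ℤ) ∧
      zcomp ((n j : ℤ)) (V : ℤ) (lrep ((n j : ℤ)) (V : ℤ) (a j)) = a j := by
    intro j
    have hb := zcomp_bounds ((n j : ℤ)) (V : ℤ) (p.1 j) (by exact_mod_cast hn j) hVZ (p.2 j).1 (p.2 j).2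
    exact lrep_spec ((n j : ℤ)) (V : ℤ) (a j) (by exact_mod_cast hn j) hVZ hb.1 hb.2
  classical
  set P : Fin d → ℤ := fun j => if j = i then rrep ((n i : ℤ)) (V : ℤ) (a i) else lrep ((n j : ℤ)) (V : ℤ) (a j) with hP
  set Q : Fin d → ℤ := fun j => if j = i then rrep ((n i : ℤ)) (V : ℤ) (a i) + 1 else lrep ((n j : ℤ)) (V : ℤ) (a j) with hQ
  have hPi : P i = rrep ((n i : ℤ)) (V : ℤ) (a i) := by simp [hP]
  have hQi : Q i = rrep ((n i : ℤ)) (V : ℤ) (a i) + 1 := by simp [hQ]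
  have hPj : ∀ j, j ≠ i → P j = lrep ((n j : ℤ)) (V : ℤ) (a j) := by
    intro j hj; simp [hP, hj]
  have hQj : ∀ j, j ≠ i → Q j = lrep ((n j : ℤ)) (V : ℤ) (a j) := by
    intro j hj; simp [hQ, hj]
  have hPmem : P ∈ grid n := by
    intro j
    by_cases hj : j = i
    · subst hj; rw [hPi]; exact ⟨hrr.1, by omega⟩
    · rw [hPj j hj]; exact ⟨(hlr j).1, (hlr j).2.1⟩
  have hQmem : Q ∈ grid n := by
    intro j
    by_cases hj : j = i
    · subst hj; rw [hQi]; exact ⟨by omega, hrr.2.1⟩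
    · rw [hQj j hj]; exact ⟨(hlr j).1, (hlr j).2.1⟩
  have hPz : ∀ j, zcomp ((n j : ℤ)) (V : ℤ) (P j) = zcomp ((n j : ℤ)) (V : ℤ) (p.1 j) := by
    intro j
    by_cases hj : j = i
    · subst hj; rw [hPi, hrr.2.2.1]
    · rw [hPj j hj, (hlr j).2.2]
  have hQz : ∀ j, zcomp ((n j : ℤ)) (V : ℤ) (Q j) = zcomp ((n j : ℤ)) (V : ℤ) (q.1 j) := by
    intro j
    by_cases hj : j = i
    · subst hj; rw [hQi, hrr.2.2.2, hstep]
    · rw [hQj j hj, (hlr j).2.2]; exact heq j hj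
  have hPrel : sense (grid n) V P = sense (grid n) V p.1 :=
    (senseEq_iff_zcomp n V P p.1 hPmem p.2).mpr hPz
  have hQrel : sense (grid n) V Q = sense (grid n) V q.1 :=
    (senseEq_iff_zcomp n V Q q.1 hQmem q.2).mpr hQz
  have hne : (Quotient.mk (senseSetoid n V) p) ≠ (Quotient.mk (senseSetoid n V) q) := by
    intro hcon
    have hrel : sense (grid n) V p.1 = sense (grid n) V q.1 := Quotient.exact hcon
    have := ((senseEq_iff_zcomp n V p.1 q.1 p.2 q.2).mp hrel) i
    omega
  refine ⟨hne, ⟨P, hPmem⟩, ⟨Q, hQmem⟩, Quotient.sound hPrel, Quotient.sound hQrel, ?_⟩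
  show manhattan _ = 1
  rw [manhattan_eq_one_iff]
  refine ⟨i, ?_, ?_⟩
  · show |P i - Q i| = 1
    rw [hPi, hQi]; simp
  · intro j hj
    show P j - Q j = 0
    rw [hPj j hj, hQj j hj]; simp

theorem senseGraph_iso_grid' (hn : ∀ i, 2 ≤ n i) (hV : 1 ≤ V) :
    Nonempty (senseGraph n V ≃g gridGraph (fun i => min (n i) (2 * V + 1))) := by
  have hVZ : (1:ℤ) ≤ (V:ℤ) := by exact_mod_cast hV
  refine ⟨⟨Equiv.ofBijective (Fmap n V hn hV) (Fmap_bijective n V hn hV), ?_⟩⟩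
  intro a b
  show (gridGraph (fun i => min (n i) (2 * V + 1))).Adj (Fmap n V hn hV a) (Fmap n V hn hV b) ↔
    (senseGraph n V).Adj a b
  induction a using Quotient.ind with | _ p => ?_
  induction b using Quotient.ind with | _ q => ?_
  constructor
  · -- grid adjacency of images → sense adjacency
    intro h
    have h1 : manhattan ((Fmap n V hn hV (Quotient.mk _ p)).1 - (Fmap n V hn hV (Quotient.mk _ q)).1) = 1 := h
    rw [manhattan_eq_one_iff] at h1
    obtain ⟨i, hi, hz⟩ := h1
    have hz' : ∀ j, j ≠ i → zcomp ((n j : ℤ)) (V : ℤ) (p.1 j) = zcomp ((n j : ℤ)) (V : ℤ) (q.1 j) := by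
      intro j hj
      have := hz j hj
      simp only [Pi.sub_apply] at this
      have : (phiSub n V hn hV p).1 j - (phiSub n V hn hV q).1 j = 0 := this
      simp only [phiSub] at this
      omega
    have hi' : (phiSub n V hn hV p).1 i - (phiSub n V hn hV q).1 i = 1 ∨
        (phiSub n V hn hV p).1 i - (phiSub n V hn hV q).1 i = -1 := by
      have := hi
      simp only [Pi.sub_apply] at this
      rcases (abs_eq (by norm_num : (0:ℤ) ≤ 1)).mp this with h' | h'
      · left; exact h'
      · right; exact h'
    simp only [phiSub] at hi'
    rcases hi' with h' | h'
    · exact (adj_helper n V hn hV q p i (by omega) (fun j hj => (hz' j hj).symm)).symm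
    · exact adj_helper n V hn hV p q i (by omega) hz'
  · -- sense adjacency → grid adjacency of images
    rintro ⟨hne, ⟨p', q', hp', hq', hadj⟩⟩
    have hFp : Fmap n V hn hV (Quotient.mk _ p) = phiSub n V hn hV p' := by
      rw [← hp']; rfl
    have hFq : Fmap n V hn hV (Quotient.mk _ q) = phiSub n V hn hV q' := by
      rw [← hq']; rfl
    show manhattan _ = 1
    rw [hFp, hFq]
    have hadj' : manhattan (p'.1 - q'.1) = 1 := hadj
    rw [manhattan_eq_one_iff] at hadj'
    obtain ⟨i, hi, hz⟩ := hadj'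
    rw [manhattan_eq_one_iff]
    refine ⟨i, ?_, ?_⟩
    · -- |zcomp p' i - zcomp q' i| = 1
      have hstep : ∀ x y : ℤ, 1 ≤ x → x + 1 ≤ (n i : ℤ) → y = x + 1 →
          zcomp ((n i : ℤ)) (V : ℤ) x ≤ zcomp ((n i : ℤ)) (V : ℤ) y ∧
          zcomp ((n i : ℤ)) (V : ℤ) y ≤ zcomp ((n i : ℤ)) (V : ℤ) x + 1 := by
        intro x y hx1 hx2 hxy
        subst hxy
        exact zcomp_step ((n i : ℤ)) (V : ℤ) x (by exact_mod_cast hn i) hVZ hx1 hx2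
      have hnonzero : (phiSub n V hn hV p').1 i ≠ (phiSub n V hn hV q').1 i := by
        intro hcon
        apply hne
        rw [← hp', ← hq']
        apply Quotient.sound
        show sense (grid n) V p'.1 = sense (grid n) V q'.1
        rw [senseEq_iff_zcomp n V p'.1 q'.1 p'.2 q'.2]
        intro j
        by_cases hj : j = i
        · subst hj; exact hcon
        · have h0 := hz j hj
          simp only [Pi.sub_apply] at h0
          have hpq : p'.1 j = q'.1 j := by omega
          rw [hpq]
      have hd1 : p'.1 i - q'.1 i = 1 ∨ p'.1 i - q'.1 i = -1 := by
        rcases (abs_eq (by norm_num : (0:ℤ) ≤ 1)).mp (by simpa using hi) with h' | h'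
        · left; omega
        · right; omega
      simp only [phiSub, Pi.sub_apply] at hnonzero ⊢
      rcases hd1 with h' | h'
      · have := hstep (q'.1 i) (p'.1 i) (q'.2 i).1 (by have := (p'.2 i).2; omega) (by omega)
        rw [abs_eq (by norm_num : (0:ℤ) ≤ 1)]
        omega
      · have := hstep (p'.1 i) (q'.1 i) (p'.2 i).1 (by have := (q'.2 i).2; omega) (by omega)
        rw [abs_eq (by norm_num : (0:ℤ) ≤ 1)]
        omega
    · intro j hj
      have h0 := hz j hj
      simp only [Pi.sub_apply] at h0 ⊢
      simp only [phiSub]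
      have hpq : p'.1 j = q'.1 j := by omega
      rw [hpq]
      omega

end SGAux

/-- The sensing region graph of `𝒟 = [n 0] × ⋯ × [n (d-1)]` with
sensing range `V ≥ 1` is isomorphic to the grid graph `[m 0] × ⋯ × [m (d-1)]` with
`m i = min (n i) (2V + 1)`. -/

theorem senseGraph_iso_grid {d : ℕ} (hd : 1 ≤ d) (n : Fin d → ℕ)
    (hn : ∀ i, 2 ≤ n i) (V : ℕ) (hV : 1 ≤ V) :
    Nonempty (senseGraph n V ≃g gridGraph (fun i => min (n i) (2 * V + 1))) := by
  exact senseGraph_iso_grid' n V hn hV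
end

section
/- Let 𝒟 = [n_1] × … × [n_d] be a d-dimensional grid graph with d ≥ 2 (all n_i ≥ 2), and let V ≥ 1 with n_1 > 2V + 1 and n_2 > 2V + 1. Then the four vertices (V+1, V+1, 1, …, 1), (V+1, V+2, 1, …, 1), (V+2, V+1, 1, …, 1) and (V+2, V+2, 1, …, 1) of 𝒟 are pairwise sensing-equivalent, i.e., they all lie in a single sensing region. -/
open Finset

/-- The vertex `(a, b, 1, …, 1)` of a `(d+2)`-dimensional grid. -/
def cornerVtx (d : ℕ) (a b : ℤ) : Fin (d + 2) → ℤ :=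
  fun i => if (i : ℕ) = 0 then a else if (i : ℕ) = 1 then b else 1


lemma corner_mem_iff (d : ℕ) (n : Fin (d + 2) → ℕ) (V : ℕ)
    (h0 : 2 * V + 1 < n 0) (h1 : 2 * V + 1 < n 1)
    (a b : ℤ) (ha : a = (V : ℤ) + 1 ∨ a = (V : ℤ) + 2)
    (hb : b = (V : ℤ) + 1 ∨ b = (V : ℤ) + 2)
    (q : Fin (d + 2) → ℤ) (hq : manhattan q ≤ (V : ℤ)) :
    (cornerVtx d a b + q ∈ grid n ↔
      ∀ i : Fin (d + 2), 2 ≤ (i : ℕ) → 1 ≤ 1 + q i ∧ 1 + q i ≤ (n i : ℤ)) := by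
  have habs : ∀ i, -(V : ℤ) ≤ q i ∧ q i ≤ (V : ℤ) := by
    intro i
    have := (abs_le_manhattan q i).trans hq
    exact abs_le.mp this
  have hn0 : (2 * V + 2 : ℤ) ≤ (n 0 : ℤ) := by exact_mod_cast h0
  have hn1 : (2 * V + 2 : ℤ) ≤ (n 1 : ℤ) := by exact_mod_cast h1
  constructor
  · intro h i hi
    have hne0 : ¬ (i : ℕ) = 0 := by omega
    have hne1 : ¬ (i : ℕ) = 1 := by omega
    have := h i
    simpa [cornerVtx, hne0, hne1] using this
  · intro h i
    by_cases hi0 : (i : ℕ) = 0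
    · have : i = 0 := Fin.ext (by simpa using hi0)
      subst this
      have := habs 0
      simp only [Pi.add_apply, cornerVtx]
      norm_num
      rcases ha with ha | ha <;> subst ha <;> constructor <;> omega
    · by_cases hi1 : (i : ℕ) = 1
      · have : i = 1 := Fin.ext (by simpa using hi1)
        subst this
        have := habs 1
        simp only [Pi.add_apply, cornerVtx]
        norm_num
        rcases hb with hb | hb <;> subst hb <;> constructor <;> omega
      · have := h i (by omega)
        simpa [cornerVtx, hi0, hi1] using this

/-- If `n 0 > 2V + 1` and `n 1 > 2V + 1` (with `d ≥ 2`), then the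
four vertices `(V+1, V+1, 1, …, 1)`, `(V+1, V+2, 1, …, 1)`, `(V+2, V+1, 1, …, 1)`,
`(V+2, V+2, 1, …, 1)` are pairwise sensing-equivalent: they all have the same sensing
data, i.e. they lie in a single sensing region. -/
theorem four_vertices_in_one_sensing_region (d : ℕ) (n : Fin (d + 2) → ℕ)
    (hn : ∀ i, 2 ≤ n i) (V : ℕ) (hV : 1 ≤ V)
    (h0 : 2 * V + 1 < n 0) (h1 : 2 * V + 1 < n 1) :
    ∀ a ∈ ({(V : ℤ) + 1, (V : ℤ) + 2} : Set ℤ),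
    ∀ b ∈ ({(V : ℤ) + 1, (V : ℤ) + 2} : Set ℤ),
    ∀ a' ∈ ({(V : ℤ) + 1, (V : ℤ) + 2} : Set ℤ),
    ∀ b' ∈ ({(V : ℤ) + 1, (V : ℤ) + 2} : Set ℤ),
      sense (grid n) V (cornerVtx d a b) = sense (grid n) V (cornerVtx d a' b') := by
  rintro a ha b hb a' ha' b' hb'
  simp only [Set.mem_insert_iff, Set.mem_singleton_iff] at ha hb ha' hb'
  ext q
  simp only [sense, Set.mem_setOf_eq]
  constructor
  · rintro ⟨hmem, hq⟩
    exact ⟨(corner_mem_iff d n V h0 h1 a' b' ha' hb' q hq).mpr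
      ((corner_mem_iff d n V h0 h1 a b ha hb q hq).mp hmem), hq⟩
  · rintro ⟨hmem, hq⟩
    exact ⟨(corner_mem_iff d n V h0 h1 a b ha hb q hq).mpr
      ((corner_mem_iff d n V h0 h1 a' b' ha' hb' q hq).mp hmem), hq⟩
end

section
/- For every sensing range V ≥ 1 there exists a grid graph that no agent algorithm with 0 bits of memory and sensing range V patrols; in particular, no agent algorithm with 0 bits of memory and sensing range V patrols the 2-dimensional grid graph [2V+2] × [2V+2]. -/
open Finset

lemma manhattan_two (q : Fin 2 → ℤ) : manhattan q = |q 0| + |q 1| := by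
  simp [manhattan, Fin.sum_univ_two]

lemma mem_grid2 {V : ℕ} {p : Fin 2 → ℤ} :
    p ∈ grid (fun _ : Fin 2 => 2 * V + 2) ↔
      1 ≤ p 0 ∧ p 0 ≤ 2 * (V:ℤ) + 2 ∧ 1 ≤ p 1 ∧ p 1 ≤ 2 * (V:ℤ) + 2 := by
  unfold grid
  rw [Set.mem_setOf_eq, Fin.forall_fin_two]
  push_cast
  tauto

lemma vec_add (a b c d : ℤ) : (![a,b] : Fin 2 → ℤ) + ![c,d] = ![a+c, b+d] := by
  funext i; fin_cases i <;> simp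

lemma vec_eta (v : Fin 2 → ℤ) : ![v 0, v 1] = v := by
  funext i; fin_cases i <;> simp

lemma vec_inj {a b c d : ℤ} (h : (![a,b] : Fin 2 → ℤ) = ![c,d]) : a = c ∧ b = d :=
  ⟨congrFun h 0, congrFun h 1⟩

/-- sense doesn't depend on second coordinate when that is in {V+1,V+2}. -/
lemma sense_col {V : ℕ} (x y y' : ℤ) (hy : (V:ℤ)+1 ≤ y) (hy2 : y ≤ (V:ℤ)+2)
    (hy' : (V:ℤ)+1 ≤ y') (hy2' : y' ≤ (V:ℤ)+2) :
    sense (grid (fun _ : Fin 2 => 2 * V + 2)) V ![x,y]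
      = sense (grid (fun _ : Fin 2 => 2 * V + 2)) V ![x,y'] := by
  ext q
  simp only [sense, Set.mem_setOf_eq, mem_grid2, Pi.add_apply, manhattan_two]
  have e0 : (![x,y] : Fin 2 → ℤ) 0 = x := rfl
  have e1 : (![x,y] : Fin 2 → ℤ) 1 = y := rfl
  have e0' : (![x,y'] : Fin 2 → ℤ) 0 = x := rfl
  have e1' : (![x,y'] : Fin 2 → ℤ) 1 = y' := rfl
  rw [e0, e1, e0', e1']
  have h0 := abs_nonneg (q 0)
  have h1 := abs_nonneg (q 1)
  have c0 := abs_choice (q 0)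
  have c1 := abs_choice (q 1)
  constructor <;> rintro ⟨⟨g1, g2, g3, g4⟩, g5⟩ <;> exact ⟨by omega, by omega⟩

/-- sense doesn't depend on first coordinate when that is in {V+1,V+2}. -/
lemma sense_row {V : ℕ} (x x' y : ℤ) (hx : (V:ℤ)+1 ≤ x) (hx2 : x ≤ (V:ℤ)+2)
    (hx' : (V:ℤ)+1 ≤ x') (hx2' : x' ≤ (V:ℤ)+2) :
    sense (grid (fun _ : Fin 2 => 2 * V + 2)) V ![x,y]
      = sense (grid (fun _ : Fin 2 => 2 * V + 2)) V ![x',y] := by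
  ext q
  simp only [sense, Set.mem_setOf_eq, mem_grid2, Pi.add_apply, manhattan_two]
  have e0 : (![x,y] : Fin 2 → ℤ) 0 = x := rfl
  have e1 : (![x,y] : Fin 2 → ℤ) 1 = y := rfl
  have e0' : (![x',y] : Fin 2 → ℤ) 0 = x' := rfl
  have e1' : (![x',y] : Fin 2 → ℤ) 1 = y := rfl
  rw [e0, e1, e0', e1']
  have h0 := abs_nonneg (q 0)
  have h1 := abs_nonneg (q 1)
  have c0 := abs_choice (q 0)
  have c1 := abs_choice (q 1)
  constructor <;> rintro ⟨⟨g1, g2, g3, g4⟩, g5⟩ <;> exact ⟨by omega, by omega⟩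

lemma unit_cases {v : Fin 2 → ℤ} (h : manhattan v = 1) :
    (v 0 = 1 ∧ v 1 = 0) ∨ (v 0 = -1 ∧ v 1 = 0) ∨ (v 0 = 0 ∧ v 1 = 1) ∨ (v 0 = 0 ∧ v 1 = -1) := by
  rw [manhattan_two] at h
  have h0 := abs_nonneg (v 0)
  have h1 := abs_nonneg (v 1)
  have c0 := abs_choice (v 0)
  have c1 := abs_choice (v 1)
  omega

/-- Core combinatorial lemma: under the structural hypotheses, we get a contradiction. -/
lemma core (V : ℕ)
    (f : (Fin 2 → ℤ) → (Fin 2 → ℤ))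
    (hfD : ∀ p ∈ grid (fun _ : Fin 2 => 2 * V + 2), f p ∈ grid (fun _ : Fin 2 => 2 * V + 2))
    (hmerge : ∀ a ∈ grid (fun _ : Fin 2 => 2 * V + 2), ∀ b ∈ grid (fun _ : Fin 2 => 2 * V + 2),
        f a = f b → a = b)
    (htwo : ∀ a ∈ grid (fun _ : Fin 2 => 2 * V + 2), ∀ b ∈ grid (fun _ : Fin 2 => 2 * V + 2),
        f a = b → f b = a → False)
    (g : ℤ → ℤ → (Fin 2 → ℤ))
    (hgD : ∀ x y, g x y ∈ grid (fun _ : Fin 2 => 2 * V + 2) ↔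
        (1 ≤ x ∧ x ≤ 2 * (V:ℤ) + 2 ∧ 1 ≤ y ∧ y ≤ 2 * (V:ℤ) + 2))
    (hginj : ∀ x y x' y', g x y = g x' y' → x = x' ∧ y = y')
    (u w : Fin 2 → ℤ)
    (hu : ∀ x y, g (x+1) y = g x y + u)
    (hw : ∀ x y, g x (y+1) = g x y + w)
    (hpair : ∀ x, f (g x ((V:ℤ)+2)) - g x ((V:ℤ)+2) = f (g x ((V:ℤ)+1)) - g x ((V:ℤ)+1))
    (hmoves : ∀ x y, g x y ∈ grid (fun _ : Fin 2 => 2 * V + 2) →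
        f (g x y) = g (x+1) y ∨ f (g x y) = g (x-1) y ∨ f (g x y) = g x (y+1) ∨
          f (g x y) = g x (y-1))
    (hbase1 : f (g ((V:ℤ)+1) ((V:ℤ)+1)) = g ((V:ℤ)+2) ((V:ℤ)+1))
    (hbase2 : f (g ((V:ℤ)+1) ((V:ℤ)+2)) = g ((V:ℤ)+2) ((V:ℤ)+2)) :
    False := by
  have key : ∀ k : ℕ, k ≤ V + 1 →
      f (g ((V:ℤ)+1+(k:ℤ)) ((V:ℤ)+1)) = g ((V:ℤ)+2+(k:ℤ)) ((V:ℤ)+1) ∧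
      f (g ((V:ℤ)+1+(k:ℤ)) ((V:ℤ)+2)) = g ((V:ℤ)+2+(k:ℤ)) ((V:ℤ)+2) := by
    intro k
    induction k with
    | zero => intro _; simpa using ⟨hbase1, hbase2⟩
    | succ k ih =>
      intro hk
      obtain ⟨ih1, ih2⟩ := ih (by omega)
      push_cast
      set x : ℤ := (V:ℤ)+2+(k:ℤ) with hxdef
      have ex : (V:ℤ)+1+((k:ℤ)+1) = x := by rw [hxdef]; ring
      have ex' : (V:ℤ)+2+((k:ℤ)+1) = x+1 := by rw [hxdef]; ring
      rw [ex, ex']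
      -- memberships
      have hm1 : g x ((V:ℤ)+1) ∈ grid (fun _ : Fin 2 => 2 * V + 2) := by
        rw [hgD]; omega
      have hm2 : g x ((V:ℤ)+2) ∈ grid (fun _ : Fin 2 => 2 * V + 2) := by
        rw [hgD]; omega
      have hm1' : g ((V:ℤ)+1+k) ((V:ℤ)+1) ∈ grid (fun _ : Fin 2 => 2 * V + 2) := by
        rw [hgD]; omega
      have hm2' : g ((V:ℤ)+1+k) ((V:ℤ)+2) ∈ grid (fun _ : Fin 2 => 2 * V + 2) := by
        rw [hgD]; omega
      have exm : x - 1 = (V:ℤ)+1+(k:ℤ) := by rw [hxdef]; ring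
      have ey1 : (V:ℤ)+1+1 = (V:ℤ)+2 := by ring
      have ey2 : (V:ℤ)+1-1+1 = (V:ℤ)+1 := by ring
      rcases hmoves x ((V:ℤ)+1) hm1 with h | h | h | h
      · -- step to the right: the good case
        refine ⟨h, ?_⟩
        have hp := hpair x
        rw [h] at hp
        have hu1 := hu x ((V:ℤ)+1)
        have hu2 := hu x ((V:ℤ)+2)
        rw [hu1, add_sub_cancel_left] at hp
        have hfx : f (g x ((V:ℤ)+2)) = g x ((V:ℤ)+2) + u := by
          have h2 := sub_eq_iff_eq_add.mp hp
          rw [h2]; ring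
        rw [hfx, ← hu2]
      · -- step back: two-cycle
        exfalso
        rw [exm] at h
        exact htwo _ hm1' _ hm1 ih1 h
      · -- step up: merge with row V+2
        exfalso
        rw [ey1] at h
        have hmm := hmerge _ hm1 _ hm2' (by rw [h, ih2])
        have := (hginj _ _ _ _ hmm).1
        omega
      · -- step down: merge via pair property
        exfalso
        have hw1 := hw x ((V:ℤ)+1-1)
        rw [ey2] at hw1
        have hp := hpair x
        rw [h] at hp
        have hstep2 : f (g x ((V:ℤ)+2)) = g x ((V:ℤ)+1) := by
          have hw2 := hw x ((V:ℤ)+1)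
          rw [ey1] at hw2
          have h2 := sub_eq_iff_eq_add.mp hp
          rw [h2, hw2, hw1]; ring
        have hmm := hmerge _ hm2 _ hm1' (by rw [hstep2, ih1])
        have := (hginj _ _ _ _ hmm).2
        omega
  -- final contradiction at x = 2V+2
  obtain ⟨k1, _⟩ := key (V+1) (le_refl _)
  have ex : (V:ℤ)+1+((V:ℕ)+1 : ℕ) = 2*(V:ℤ)+2 := by push_cast; ring
  have ex2 : (V:ℤ)+2+((V:ℕ)+1 : ℕ) = 2*(V:ℤ)+3 := by push_cast; ring
  rw [ex, ex2] at k1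
  have : g (2*(V:ℤ)+3) ((V:ℤ)+1) ∈ grid (fun _ : Fin 2 => 2 * V + 2) := by
    rw [← k1]
    exact hfD _ (by rw [hgD]; omega)
  rw [hgD] at this
  omega

abbrev D2 (V : ℕ) : Set (Fin 2 → ℤ) := grid (fun _ : Fin 2 => 2 * V + 2)

/-- The one-step move function of a memoryless agent. -/
def stepf (V : ℕ) (A : Agent 2 0) : (Fin 2 → ℤ) → (Fin 2 → ℤ) :=
  fun p => p + (A.act (sense (D2 V) V p) (fun i => i.elim0)).1

lemma stepf_iter (V : ℕ) (A : Agent 2 0) (v : Fin 2 → ℤ) (m : Fin 0 → Bool) (t : ℕ) :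
    (A.traj (D2 V) V v m t).1 = (stepf V A)^[t] v := by
  induction t with
  | zero => rfl
  | succ t ih =>
    show (A.traj (D2 V) V v m t).1 +
        (A.act (sense (D2 V) V (A.traj (D2 V) V v m t).1) (A.traj (D2 V) V v m t).2).1 = _
    have hm : (A.traj (D2 V) V v m t).2 = (fun i => i.elim0) := funext fun i => i.elim0
    rw [hm, ih, Function.iterate_succ_apply']
    rfl

lemma key (V : ℕ) (hV : 1 ≤ V) :
    ¬ ∃ A : Agent 2 0, A.Patrols (grid (fun _ : Fin 2 => 2 * V + 2)) V := by
  rintro ⟨A, hval, hpat⟩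
  set f := stepf V A with hf
  set m₀ : Fin 0 → Bool := (fun i => i.elim0) with hm₀
  -- basic facts
  have hact : ∀ p ∈ D2 V, manhattan ((A.act (sense (D2 V) V p) m₀).1) = 1 ∧
      p + (A.act (sense (D2 V) V p) m₀).1 ∈ D2 V := by
    intro p hp
    have h := hval p hp m₀
    exact ⟨h.1, h.2.1⟩
  have hfD : ∀ p ∈ D2 V, f p ∈ D2 V := fun p hp => (hact p hp).2
  have hman : ∀ p ∈ D2 V, manhattan (f p - p) = 1 := by
    intro p hp
    have h := (hact p hp).1
    rw [hf]
    simp only [stepf, add_sub_cancel_left]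
    exact h
  have hvisit : ∀ a ∈ D2 V, ∀ w ∈ D2 V, ∃ t, f^[t] a = w := by
    intro a ha w hw
    obtain ⟨t, ht⟩ := hpat a ha m₀ w hw
    exact ⟨t, by rw [← stepf_iter]; exact ht⟩
  have hcent : ∀ (c p : Fin 2 → ℤ), sense (D2 V) V p = sense (D2 V) V c →
      f p = p + (A.act (sense (D2 V) V c) m₀).1 := by
    intro c p h
    rw [hf]
    show p + _ = _
    rw [h]
  -- no merging of trajectories
  have hmerge : ∀ a ∈ D2 V, ∀ b ∈ D2 V, f a = f b → a = b := by
    intro a ha b hb hab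
    by_contra hne
    have hc : f a ∈ D2 V := hfD a ha
    obtain ⟨j, hj⟩ := hvisit a ha b hb
    rcases j with _ | j'
    · simp only [Function.iterate_zero_apply] at hj
      exact hne hj
    · have hjc : f^[j'] (f a) = b := by
        rw [← Function.iterate_succ_apply]; exact hj
      have hperiod_b : f^[j' + 1] (f a) = f a := by
        rw [Function.iterate_succ_apply', hjc, ← hab]
      obtain ⟨i, hi⟩ := hvisit (f a) hc a ha
      have hperiod_a : f^[i + 1] (f a) = f a := by
        rw [Function.iterate_succ_apply', hi]
      have hp1 : Function.IsPeriodicPt f (i + 1) (f a) := hperiod_a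
      have hp2 : Function.IsPeriodicPt f (j' + 1) (f a) := hperiod_b
      have hd1 := hp1.minimalPeriod_dvd
      have hd2 := hp2.minimalPeriod_dvd
      have hLpos : 0 < Function.minimalPeriod f (f a) :=
        hp1.minimalPeriod_pos (Nat.succ_pos i)
      set L := Function.minimalPeriod f (f a) with hL
      have hmod : ∀ n : ℕ, L ∣ (n + 1) → n % L = L - 1 := by
        intro n hdvd
        obtain ⟨m, hm⟩ := hdvd
        rcases m with _ | m'
        · rw [Nat.mul_zero] at hm; omega
        · have hm' : n = (L - 1) + L * m' := by rw [Nat.mul_succ] at hm; omega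
          rw [hm', Nat.add_mul_mod_self_left, Nat.mod_eq_of_lt (by omega)]
      have e1 : f^[i % L] (f a) = f^[i] (f a) := Function.iterate_mod_minimalPeriod_eq
      have e2 : f^[j' % L] (f a) = f^[j'] (f a) := Function.iterate_mod_minimalPeriod_eq
      rw [hmod i hd1] at e1
      rw [hmod j' hd2] at e2
      exact hne (by rw [← hi, ← e1, e2, hjc])
  -- no 2-cycles
  have htwo : ∀ a ∈ D2 V, ∀ b ∈ D2 V, f a = b → f b = a → False := by
    intro a ha b hb hab hba
    have horb : ∀ t, f^[t] a = a ∨ f^[t] a = b := by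
      intro t
      induction t with
      | zero => left; rfl
      | succ t ih =>
        rw [Function.iterate_succ_apply']
        rcases ih with h | h <;> rw [h]
        · right; exact hab
        · left; exact hba
    have d12 : (![1,1] : Fin 2 → ℤ) ≠ ![1,2] := by
      intro h; have := vec_inj h; omega
    have d13 : (![1,1] : Fin 2 → ℤ) ≠ ![2,1] := by
      intro h; have := vec_inj h; omega
    have d23 : (![1,2] : Fin 2 → ℤ) ≠ ![2,1] := by
      intro h; have := vec_inj h; omega
    have hc1 : (![1,1] : Fin 2 → ℤ) ∈ D2 V := mem_grid2.mpr (by norm_num; omega)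
    have hc2 : (![1,2] : Fin 2 → ℤ) ∈ D2 V := mem_grid2.mpr (by norm_num; omega)
    have hc3 : (![2,1] : Fin 2 → ℤ) ∈ D2 V := mem_grid2.mpr (by norm_num; omega)
    have hex : ∃ w ∈ D2 V, w ≠ a ∧ w ≠ b := by
      rcases Classical.em ((![1,1] : Fin 2 → ℤ) = a ∨ (![1,1] : Fin 2 → ℤ) = b) with h1 | h1
      · rcases Classical.em ((![1,2] : Fin 2 → ℤ) = a ∨ (![1,2] : Fin 2 → ℤ) = b) with h2 | h2
        · refine ⟨![2,1], hc3, ?_, ?_⟩ <;> intro h <;>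
            rcases h1 with h1 | h1 <;> rcases h2 with h2 | h2 <;>
            first
              | exact d12 (h1.trans h2.symm)
              | exact d13 (h1.trans h.symm)
              | exact d23 (h2.trans h.symm)
        · exact ⟨![1,2], hc2, fun h => h2 (Or.inl h), fun h => h2 (Or.inr h)⟩
      · exact ⟨![1,1], hc1, fun h => h1 (Or.inl h), fun h => h1 (Or.inr h)⟩
    obtain ⟨w, hw, hwa, hwb⟩ := hex
    obtain ⟨t, ht⟩ := hvisit a ha w hw
    rcases horb t with h | h
    · exact hwa (ht.symm.trans h)
    · exact hwb (ht.symm.trans h)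
  -- the four central cells share the same sensing data
  have hc00D : (![(V:ℤ)+1,(V:ℤ)+1] : Fin 2 → ℤ) ∈ D2 V := by
    rw [mem_grid2]
    constructor
    · simp
    constructor
    · simp; omega
    constructor
    · simp
    · simp; omega
  have sense_central : ∀ x y : ℤ, (V:ℤ)+1 ≤ x → x ≤ (V:ℤ)+2 → (V:ℤ)+1 ≤ y → y ≤ (V:ℤ)+2 →
      sense (D2 V) V ![x,y] = sense (D2 V) V ![(V:ℤ)+1,(V:ℤ)+1] := by
    intro x y hx hx2 hy hy2
    exact (sense_row x ((V:ℤ)+1) y hx hx2 (by omega) (by omega)).trans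
      (sense_col ((V:ℤ)+1) y ((V:ℤ)+1) hy hy2 (by omega) (by omega))
  have hcent2 : ∀ p q : Fin 2 → ℤ, sense (D2 V) V p = sense (D2 V) V q →
      f p - p = f q - q := by
    intro p q h
    rw [hcent q p h, hcent q q rfl]
    ring
  have hs1 : manhattan ((A.act (sense (D2 V) V ![(V:ℤ)+1,(V:ℤ)+1]) m₀).1) = 1 :=
    (hact _ hc00D).1
  rcases unit_cases hs1 with ⟨h0, h1⟩ | ⟨h0, h1⟩ | ⟨h0, h1⟩ | ⟨h0, h1⟩
  · -- step is (1,0) : use g x y = ![x, y]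
    have hgD : ∀ x y : ℤ, (![x,y] : Fin 2 → ℤ) ∈ D2 V ↔
        (1 ≤ x ∧ x ≤ 2*(V:ℤ)+2 ∧ 1 ≤ y ∧ y ≤ 2*(V:ℤ)+2) := by
      intro x y; rw [mem_grid2]; simp
    have hginj : ∀ x y x' y' : ℤ, (![x,y] : Fin 2 → ℤ) = ![x',y'] → x = x' ∧ y = y' :=
      fun x y x' y' h => vec_inj h
    have hu : ∀ x y : ℤ, (![x+1,y] : Fin 2 → ℤ) = ![x,y] + ![1,0] := by
      intro x y; funext i; fin_cases i <;> simp
    have hw : ∀ x y : ℤ, (![x,y+1] : Fin 2 → ℤ) = ![x,y] + ![0,1] := by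
      intro x y; funext i; fin_cases i <;> simp
    have hpair : ∀ x : ℤ, f ![x,(V:ℤ)+2] - ![x,(V:ℤ)+2] = f ![x,(V:ℤ)+1] - ![x,(V:ℤ)+1] :=
      fun x => hcent2 _ _ (sense_col x ((V:ℤ)+2) ((V:ℤ)+1) (by omega) (by omega) (by omega) (by omega))
    have hmoves : ∀ x y : ℤ, (![x,y] : Fin 2 → ℤ) ∈ D2 V →
        f ![x,y] = ![x+1,y] ∨ f ![x,y] = ![x-1,y] ∨ f ![x,y] = ![x,y+1] ∨ f ![x,y] = ![x,y-1] := by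
      intro x y hxy
      rcases unit_cases (hman _ hxy) with ⟨h0',h1'⟩ | ⟨h0',h1'⟩ | ⟨h0',h1'⟩ | ⟨h0',h1'⟩ <;>
        simp only [Pi.sub_apply, Matrix.cons_val_zero, Matrix.cons_val_one, Matrix.head_cons] at h0' h1'
      · left; funext i; fin_cases i <;> simp <;> omega
      · right; left; funext i; fin_cases i <;> simp <;> omega
      · right; right; left; funext i; fin_cases i <;> simp <;> omega
      · right; right; right; funext i; fin_cases i <;> simp <;> omega
    have hb1 : f ![(V:ℤ)+1,(V:ℤ)+1] = ![(V:ℤ)+2,(V:ℤ)+1] := by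
      rw [hcent ![(V:ℤ)+1,(V:ℤ)+1] ![(V:ℤ)+1,(V:ℤ)+1] rfl]
      funext i; fin_cases i <;> simp [h0, h1] <;> omega
    have hb2 : f ![(V:ℤ)+1,(V:ℤ)+2] = ![(V:ℤ)+2,(V:ℤ)+2] := by
      rw [hcent ![(V:ℤ)+1,(V:ℤ)+1] ![(V:ℤ)+1,(V:ℤ)+2]
        (sense_central ((V:ℤ)+1) ((V:ℤ)+2) (by omega) (by omega) (by omega) (by omega))]
      funext i; fin_cases i <;> simp [h0, h1] <;> omega
    exact core V f hfD hmerge htwo (fun x y => ![x,y]) hgD hginj ![1,0] ![0,1] hu hw hpair hmoves hb1 hb2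
  · -- step is (-1,0) : use g x y = ![2V+3-x, y]
    have hgD : ∀ x y : ℤ, (![2*(V:ℤ)+3-x,y] : Fin 2 → ℤ) ∈ D2 V ↔
        (1 ≤ x ∧ x ≤ 2*(V:ℤ)+2 ∧ 1 ≤ y ∧ y ≤ 2*(V:ℤ)+2) := by
      intro x y; rw [mem_grid2]; simp; omega
    have hginj : ∀ x y x' y' : ℤ, (![2*(V:ℤ)+3-x,y] : Fin 2 → ℤ) = ![2*(V:ℤ)+3-x',y'] →
        x = x' ∧ y = y' := by
      intro x y x' y' h
      obtain ⟨e1, e2⟩ := vec_inj h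
      exact ⟨by omega, e2⟩
    have hu : ∀ x y : ℤ, (![2*(V:ℤ)+3-(x+1),y] : Fin 2 → ℤ) = ![2*(V:ℤ)+3-x,y] + ![-1,0] := by
      intro x y; funext i; fin_cases i <;> simp <;> omega
    have hw : ∀ x y : ℤ, (![2*(V:ℤ)+3-x,y+1] : Fin 2 → ℤ) = ![2*(V:ℤ)+3-x,y] + ![0,1] := by
      intro x y; funext i; fin_cases i <;> simp
    have hpair : ∀ x : ℤ, f ![2*(V:ℤ)+3-x,(V:ℤ)+2] - ![2*(V:ℤ)+3-x,(V:ℤ)+2]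
        = f ![2*(V:ℤ)+3-x,(V:ℤ)+1] - ![2*(V:ℤ)+3-x,(V:ℤ)+1] :=
      fun x => hcent2 _ _ (sense_col (2*(V:ℤ)+3-x) ((V:ℤ)+2) ((V:ℤ)+1) (by omega) (by omega) (by omega) (by omega))
    have hmoves : ∀ x y : ℤ, (![2*(V:ℤ)+3-x,y] : Fin 2 → ℤ) ∈ D2 V →
        f ![2*(V:ℤ)+3-x,y] = ![2*(V:ℤ)+3-(x+1),y] ∨ f ![2*(V:ℤ)+3-x,y] = ![2*(V:ℤ)+3-(x-1),y] ∨
          f ![2*(V:ℤ)+3-x,y] = ![2*(V:ℤ)+3-x,y+1] ∨ f ![2*(V:ℤ)+3-x,y] = ![2*(V:ℤ)+3-x,y-1] := by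
      intro x y hxy
      rcases unit_cases (hman _ hxy) with ⟨h0',h1'⟩ | ⟨h0',h1'⟩ | ⟨h0',h1'⟩ | ⟨h0',h1'⟩ <;>
        simp only [Pi.sub_apply, Matrix.cons_val_zero, Matrix.cons_val_one, Matrix.head_cons] at h0' h1'
      · right; left; funext i; fin_cases i <;> simp <;> omega
      · left; funext i; fin_cases i <;> simp <;> omega
      · right; right; left; funext i; fin_cases i <;> simp <;> omega
      · right; right; right; funext i; fin_cases i <;> simp <;> omega
    have hb1 : f ![2*(V:ℤ)+3-((V:ℤ)+1),(V:ℤ)+1] = ![2*(V:ℤ)+3-((V:ℤ)+2),(V:ℤ)+1] := by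
      rw [hcent ![(V:ℤ)+1,(V:ℤ)+1] ![2*(V:ℤ)+3-((V:ℤ)+1),(V:ℤ)+1]
        (sense_central (2*(V:ℤ)+3-((V:ℤ)+1)) ((V:ℤ)+1) (by omega) (by omega) (by omega) (by omega))]
      funext i; fin_cases i <;> simp [h0, h1] <;> omega
    have hb2 : f ![2*(V:ℤ)+3-((V:ℤ)+1),(V:ℤ)+2] = ![2*(V:ℤ)+3-((V:ℤ)+2),(V:ℤ)+2] := by
      rw [hcent ![(V:ℤ)+1,(V:ℤ)+1] ![2*(V:ℤ)+3-((V:ℤ)+1),(V:ℤ)+2]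
        (sense_central (2*(V:ℤ)+3-((V:ℤ)+1)) ((V:ℤ)+2) (by omega) (by omega) (by omega) (by omega))]
      funext i; fin_cases i <;> simp [h0, h1] <;> omega
    exact core V f hfD hmerge htwo (fun x y => ![2*(V:ℤ)+3-x,y]) hgD hginj ![-1,0] ![0,1] hu hw hpair hmoves hb1 hb2
  · -- step is (0,1) : use g x y = ![y, x]
    have hgD : ∀ x y : ℤ, (![y,x] : Fin 2 → ℤ) ∈ D2 V ↔
        (1 ≤ x ∧ x ≤ 2*(V:ℤ)+2 ∧ 1 ≤ y ∧ y ≤ 2*(V:ℤ)+2) := by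
      intro x y; rw [mem_grid2]; simp; tauto
    have hginj : ∀ x y x' y' : ℤ, (![y,x] : Fin 2 → ℤ) = ![y',x'] → x = x' ∧ y = y' := by
      intro x y x' y' h
      obtain ⟨e1, e2⟩ := vec_inj h
      exact ⟨e2, e1⟩
    have hu : ∀ x y : ℤ, (![y,x+1] : Fin 2 → ℤ) = ![y,x] + ![0,1] := by
      intro x y; funext i; fin_cases i <;> simp
    have hw : ∀ x y : ℤ, (![y+1,x] : Fin 2 → ℤ) = ![y,x] + ![1,0] := by
      intro x y; funext i; fin_cases i <;> simp
    have hpair : ∀ x : ℤ, f ![(V:ℤ)+2,x] - ![(V:ℤ)+2,x] = f ![(V:ℤ)+1,x] - ![(V:ℤ)+1,x] :=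
      fun x => hcent2 _ _ (sense_row ((V:ℤ)+2) ((V:ℤ)+1) x (by omega) (by omega) (by omega) (by omega))
    have hmoves : ∀ x y : ℤ, (![y,x] : Fin 2 → ℤ) ∈ D2 V →
        f ![y,x] = ![y,x+1] ∨ f ![y,x] = ![y,x-1] ∨ f ![y,x] = ![y+1,x] ∨ f ![y,x] = ![y-1,x] := by
      intro x y hxy
      rcases unit_cases (hman _ hxy) with ⟨h0',h1'⟩ | ⟨h0',h1'⟩ | ⟨h0',h1'⟩ | ⟨h0',h1'⟩ <;>
        simp only [Pi.sub_apply, Matrix.cons_val_zero, Matrix.cons_val_one, Matrix.head_cons] at h0' h1'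
      · right; right; left; funext i; fin_cases i <;> simp <;> omega
      · right; right; right; funext i; fin_cases i <;> simp <;> omega
      · left; funext i; fin_cases i <;> simp <;> omega
      · right; left; funext i; fin_cases i <;> simp <;> omega
    have hb1 : f ![(V:ℤ)+1,(V:ℤ)+1] = ![(V:ℤ)+1,(V:ℤ)+2] := by
      rw [hcent ![(V:ℤ)+1,(V:ℤ)+1] ![(V:ℤ)+1,(V:ℤ)+1] rfl]
      funext i; fin_cases i <;> simp [h0, h1] <;> omega
    have hb2 : f ![(V:ℤ)+2,(V:ℤ)+1] = ![(V:ℤ)+2,(V:ℤ)+2] := by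
      rw [hcent ![(V:ℤ)+1,(V:ℤ)+1] ![(V:ℤ)+2,(V:ℤ)+1]
        (sense_central ((V:ℤ)+2) ((V:ℤ)+1) (by omega) (by omega) (by omega) (by omega))]
      funext i; fin_cases i <;> simp [h0, h1] <;> omega
    exact core V f hfD hmerge htwo (fun x y => ![y,x]) hgD hginj ![0,1] ![1,0] hu hw hpair hmoves hb1 hb2
  · -- step is (0,-1) : use g x y = ![y, 2V+3-x]
    have hgD : ∀ x y : ℤ, (![y,2*(V:ℤ)+3-x] : Fin 2 → ℤ) ∈ D2 V ↔
        (1 ≤ x ∧ x ≤ 2*(V:ℤ)+2 ∧ 1 ≤ y ∧ y ≤ 2*(V:ℤ)+2) := by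
      intro x y; rw [mem_grid2]; simp; omega
    have hginj : ∀ x y x' y' : ℤ, (![y,2*(V:ℤ)+3-x] : Fin 2 → ℤ) = ![y',2*(V:ℤ)+3-x'] →
        x = x' ∧ y = y' := by
      intro x y x' y' h
      obtain ⟨e1, e2⟩ := vec_inj h
      exact ⟨by omega, e1⟩
    have hu : ∀ x y : ℤ, (![y,2*(V:ℤ)+3-(x+1)] : Fin 2 → ℤ) = ![y,2*(V:ℤ)+3-x] + ![0,-1] := by
      intro x y; funext i; fin_cases i <;> simp <;> omega
    have hw : ∀ x y : ℤ, (![y+1,2*(V:ℤ)+3-x] : Fin 2 → ℤ) = ![y,2*(V:ℤ)+3-x] + ![1,0] := by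
      intro x y; funext i; fin_cases i <;> simp
    have hpair : ∀ x : ℤ, f ![(V:ℤ)+2,2*(V:ℤ)+3-x] - ![(V:ℤ)+2,2*(V:ℤ)+3-x]
        = f ![(V:ℤ)+1,2*(V:ℤ)+3-x] - ![(V:ℤ)+1,2*(V:ℤ)+3-x] :=
      fun x => hcent2 _ _ (sense_row ((V:ℤ)+2) ((V:ℤ)+1) (2*(V:ℤ)+3-x) (by omega) (by omega) (by omega) (by omega))
    have hmoves : ∀ x y : ℤ, (![y,2*(V:ℤ)+3-x] : Fin 2 → ℤ) ∈ D2 V →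
        f ![y,2*(V:ℤ)+3-x] = ![y,2*(V:ℤ)+3-(x+1)] ∨ f ![y,2*(V:ℤ)+3-x] = ![y,2*(V:ℤ)+3-(x-1)] ∨
          f ![y,2*(V:ℤ)+3-x] = ![y+1,2*(V:ℤ)+3-x] ∨ f ![y,2*(V:ℤ)+3-x] = ![y-1,2*(V:ℤ)+3-x] := by
      intro x y hxy
      rcases unit_cases (hman _ hxy) with ⟨h0',h1'⟩ | ⟨h0',h1'⟩ | ⟨h0',h1'⟩ | ⟨h0',h1'⟩ <;>
        simp only [Pi.sub_apply, Matrix.cons_val_zero, Matrix.cons_val_one, Matrix.head_cons] at h0' h1'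
      · right; right; left; funext i; fin_cases i <;> simp <;> omega
      · right; right; right; funext i; fin_cases i <;> simp <;> omega
      · right; left; funext i; fin_cases i <;> simp <;> omega
      · left; funext i; fin_cases i <;> simp <;> omega
    have hb1 : f ![(V:ℤ)+1,2*(V:ℤ)+3-((V:ℤ)+1)] = ![(V:ℤ)+1,2*(V:ℤ)+3-((V:ℤ)+2)] := by
      rw [hcent ![(V:ℤ)+1,(V:ℤ)+1] ![(V:ℤ)+1,2*(V:ℤ)+3-((V:ℤ)+1)]
        (sense_central ((V:ℤ)+1) (2*(V:ℤ)+3-((V:ℤ)+1)) (by omega) (by omega) (by omega) (by omega))]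
      funext i; fin_cases i <;> simp [h0, h1] <;> omega
    have hb2 : f ![(V:ℤ)+2,2*(V:ℤ)+3-((V:ℤ)+1)] = ![(V:ℤ)+2,2*(V:ℤ)+3-((V:ℤ)+2)] := by
      rw [hcent ![(V:ℤ)+1,(V:ℤ)+1] ![(V:ℤ)+2,2*(V:ℤ)+3-((V:ℤ)+1)]
        (sense_central ((V:ℤ)+2) (2*(V:ℤ)+3-((V:ℤ)+1)) (by omega) (by omega) (by omega) (by omega))]
      funext i; fin_cases i <;> simp [h0, h1] <;> omega
    exact core V f hfD hmerge htwo (fun x y => ![y,2*(V:ℤ)+3-x]) hgD hginj ![0,-1] ![1,0] hu hw hpair hmoves hb1 hb2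


/-- For every sensing range `V ≥ 1` there is a grid graph that no
agent algorithm with `0` bits of memory and sensing range `V` patrols; in particular,
no such algorithm patrols the 2-dimensional grid graph `[2V+2] × [2V+2]`. -/
theorem exists_unpatrollable_grid_for_every_V (V : ℕ) (hV : 1 ≤ V) :
    (∃ (d : ℕ) (n : Fin d → ℕ), 1 ≤ d ∧ (∀ i, 2 ≤ n i) ∧
      ¬ ∃ A : Agent d 0, A.Patrols (grid n) V) ∧
    ¬ ∃ A : Agent 2 0, A.Patrols (grid (fun _ : Fin 2 => 2 * V + 2)) V := by
  have hkey := key V hV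
  exact ⟨⟨2, fun _ => 2 * V + 2, by norm_num, fun i => by show 2 ≤ 2 * V + 2; omega, hkey⟩, hkey⟩
end
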